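/- arXiv:1505.01597 — 5 statements merged into one kernel-verified Lean document; each statement's English description precedes it below -/
import Mathlib

section
/- Let a > 0 and p ∈ (0,2). Define F_p := {(x,y) ∈ ℝ² : 0 ≤ x ≤ a and 0 ≤ y ≤ p√(a²−x²)/2}, B(h) := {z ∈ ℝ² : |z| ≤ a−h}, and c(p) := 2p√(2a)/(3√(4−p²)). Then there exist constants C > 0 and h₀ > 0 such that for all h ∈ (0,h₀), |λ²(F_p \ B(h)) − c(p) h^{3/2}| ≤ C h^{5/2}. -/
open MeasureTheory ProbabilityTheory Set Filter Topology

noncomputable section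

/-- The plane with the Euclidean norm. -/
abbrev Pt := EuclideanSpace ℝ (Fin 2)

/-- The point with coordinates `(x, y)`. -/
def pt (x y : ℝ) : Pt := WithLp.toLp 2 ![x, y]


set_option maxHeartbeats 1000000



lemma volume_cap (a p r : ℝ) (ha : 0 < a) (hp : 0 ≤ p) (hr : 0 ≤ r) :
    volume ({z : Pt | 0 ≤ z 0 ∧ z 0 ≤ a ∧ 0 ≤ z 1 ∧
          z 1 ≤ p * Real.sqrt (a ^ 2 - z 0 ^ 2) / 2} \
        Metric.closedBall 0 r)
    = ENNReal.ofReal (∫ x in (0:ℝ)..a,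
        max (p * Real.sqrt (a ^ 2 - x ^ 2) / 2 - Real.sqrt (r ^ 2 - x ^ 2)) 0) := by
  set f : ℝ → ℝ := fun x => p * Real.sqrt (a ^ 2 - x ^ 2) / 2 with hf
  set g : ℝ → ℝ := fun x => Real.sqrt (r ^ 2 - x ^ 2) with hg
  have hfc : Continuous f :=
    (continuous_const.mul (Real.continuous_sqrt.comp
      (continuous_const.sub (continuous_pow 2)))).div_const 2
  have hgc : Continuous g :=
    Real.continuous_sqrt.comp (continuous_const.sub (continuous_pow 2))
  have hfnn : ∀ x, 0 ≤ f x := fun x => by positivity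
  have hgnn : ∀ x, 0 ≤ g x := fun x => Real.sqrt_nonneg _
  set S2 : Set (ℝ × ℝ) :=
    {w | (0 ≤ w.1 ∧ w.1 ≤ a ∧ 0 ≤ w.2 ∧ w.2 ≤ f w.1) ∧ ¬ (w.1 ^ 2 + w.2 ^ 2 ≤ r ^ 2)} with hS2
  have hS2m : MeasurableSet S2 := by
    apply MeasurableSet.inter
    · refine (isClosed_le continuous_const continuous_fst).measurableSet.inter ?_
      refine (isClosed_le continuous_fst continuous_const).measurableSet.inter ?_
      refine (isClosed_le continuous_const continuous_snd).measurableSet.inter ?_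
      exact (isClosed_le continuous_snd (hfc.comp continuous_fst)).measurableSet
    · exact ((isClosed_le ((continuous_fst.pow 2).add (continuous_snd.pow 2)) continuous_const).measurableSet).compl
  have key : volume ({z : Pt | 0 ≤ z 0 ∧ z 0 ≤ a ∧ 0 ≤ z 1 ∧
          z 1 ≤ p * Real.sqrt (a ^ 2 - z 0 ^ 2) / 2} \
        Metric.closedBall 0 r) = volume S2 := by
    have T := (EuclideanSpace.volume_preserving_symm_measurableEquiv_toLp (Fin 2)).trans
      (volume_preserving_finTwoArrow ℝ)
    rw [← T.measure_preimage hS2m.nullMeasurableSet]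
    congr 1
    have e1 : ∀ z : Pt, (((MeasurableEquiv.toLp 2 (Fin 2 → ℝ)).symm.trans
        MeasurableEquiv.finTwoArrow) z).1 = z 0 := fun _ => rfl
    have e2 : ∀ z : Pt, (((MeasurableEquiv.toLp 2 (Fin 2 → ℝ)).symm.trans
        MeasurableEquiv.finTwoArrow) z).2 = z 1 := fun _ => rfl
    ext z
    have hnorm : ‖z‖ ^ 2 = z 0 ^ 2 + z 1 ^ 2 := by
      rw [EuclideanSpace.norm_eq, Real.sq_sqrt (by positivity)]
      simp [Fin.sum_univ_two]
    simp only [Set.mem_preimage, hS2, Set.mem_setOf_eq, Set.mem_diff, e1, e2,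
      Metric.mem_closedBall, dist_zero_right]
    constructor
    · rintro ⟨⟨h1, h2, h3, h4⟩, h5⟩
      refine ⟨⟨h1, h2, h3, h4⟩, fun hc => h5 ?_⟩
      nlinarith [norm_nonneg z]
    · rintro ⟨⟨h1, h2, h3, h4⟩, h5⟩
      refine ⟨⟨h1, h2, h3, h4⟩, fun hc => h5 ?_⟩
      nlinarith [norm_nonneg z]
  rw [key, Measure.volume_eq_prod, Measure.prod_apply hS2m]
  have hsec : ∀ x : ℝ, volume (Prod.mk x ⁻¹' S2)
      = ENNReal.ofReal ((Set.indicator (Set.Icc 0 a)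
          (fun x => max (f x - g x) 0)) x) := by
    intro x
    by_cases hx : x ∈ Set.Icc (0:ℝ) a
    · rw [Set.indicator_of_mem hx]
      by_cases hrx : r ^ 2 - x ^ 2 < 0
      · have hg0 : g x = 0 := Real.sqrt_eq_zero'.2 (by linarith)
        have hpre : Prod.mk x ⁻¹' S2 = Set.Icc 0 (f x) := by
          ext y
          simp only [hS2, Set.mem_preimage, Set.mem_setOf_eq, Set.mem_Icc, not_le]
          constructor
          · rintro ⟨⟨_, _, h3, h4⟩, _⟩; exact ⟨h3, h4⟩
          · rintro ⟨h3, h4⟩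
            exact ⟨⟨hx.1, hx.2, h3, h4⟩, by nlinarith⟩
        rw [hpre, Real.volume_Icc, hg0, sub_zero, max_eq_left (hfnn x)]
      · push_neg at hrx
        have hpre : Prod.mk x ⁻¹' S2 = Set.Ioc (g x) (f x) := by
          ext y
          simp only [hS2, Set.mem_preimage, Set.mem_setOf_eq, Set.mem_Ioc, not_le]
          constructor
          · rintro ⟨⟨_, _, h3, h4⟩, h5⟩
            refine ⟨?_, h4⟩
            have hy : 0 < y := by
              rcases h3.lt_or_eq with h | h
              · exact h
              · exfalso; nlinarith
            exact (Real.sqrt_lt' hy).2 (by nlinarith)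
          · rintro ⟨h3, h4⟩
            have hy : 0 < y := lt_of_le_of_lt (hgnn x) h3
            have hsq : g x ^ 2 < y ^ 2 := by
              apply pow_lt_pow_left₀ h3 (hgnn x)
              norm_num
            rw [Real.sq_sqrt hrx] at hsq
            exact ⟨⟨hx.1, hx.2, hy.le, h4⟩, by nlinarith⟩
        rw [hpre, Real.volume_Ioc]
        rcases le_total (f x - g x) 0 with h | h
        · rw [max_eq_right h, ENNReal.ofReal_of_nonpos h, ENNReal.ofReal_zero]
        · rw [max_eq_left h]
    · rw [Set.indicator_of_notMem hx]
      have hpre : Prod.mk x ⁻¹' S2 = ∅ := by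
        ext y
        simp only [hS2, Set.mem_preimage, Set.mem_setOf_eq, Set.mem_empty_iff_false, iff_false]
        rintro ⟨⟨h1, h2, _, _⟩, _⟩
        exact hx ⟨h1, h2⟩
      simp [hpre]
  rw [lintegral_congr hsec]
  have hcont : Continuous (fun x => max (f x - g x) 0) :=
    (hfc.sub hgc).max continuous_const
  have hint : Integrable (Set.indicator (Set.Icc 0 a) (fun x => max (f x - g x) 0)) :=
    (hcont.integrableOn_Icc).integrable_indicator measurableSet_Icc
  rw [← MeasureTheory.ofReal_integral_eq_lintegral_ofReal hint
    (Filter.Eventually.of_forall (Set.indicator_nonneg (fun x _ => le_max_right _ _)))]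
  congr 1
  rw [MeasureTheory.integral_indicator measurableSet_Icc,
    MeasureTheory.integral_Icc_eq_integral_Ioc,
    intervalIntegral.integral_of_le ha.le]


lemma rpow_tq {t : ℝ} (ht : 0 ≤ t) : t ^ ((3:ℝ)/2) = t * Real.sqrt t := by
  rw [show (3:ℝ)/2 = 1 + 1/2 by norm_num, Real.rpow_add' ht (by norm_num), Real.rpow_one,
    Real.sqrt_eq_rpow]

lemma rpow_fq {t : ℝ} (ht : 0 ≤ t) : t ^ ((5:ℝ)/2) = t^2 * Real.sqrt t := by
  rw [show (5:ℝ)/2 = 2 + 1/2 by norm_num, Real.rpow_add' ht (by norm_num), Real.sqrt_eq_rpow,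
    show (2:ℝ) = ((2:ℕ):ℝ) by norm_num, Real.rpow_natCast]

lemma sqrt_four : Real.sqrt 4 = 2 := by
  rw [show (4:ℝ) = 2^2 by norm_num, Real.sqrt_sq (by norm_num)]

lemma model_integral (a p h q : ℝ) (ha : 0 < a) (hp0 : 0 < p) (hp2 : p < 2)
    (hq : q = 1 - p^2/4) (hh0 : 0 < h) (hh : h < q * a / 2) :
    ∫ x in (0:ℝ)..a, max (p * Real.sqrt (2*a) * Real.sqrt (a - x) / 2
        - Real.sqrt (2*a) * Real.sqrt (a - h - x)) 0
      = 2 * p * Real.sqrt (2 * a) / (3 * Real.sqrt (4 - p ^ 2)) * h ^ ((3 : ℝ) / 2) := by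
  have hq0 : 0 < q := by nlinarith
  have hq1 : q < 1 := by nlinarith
  set m : ℝ → ℝ := fun x => max (p * Real.sqrt (2*a) * Real.sqrt (a - x) / 2
        - Real.sqrt (2*a) * Real.sqrt (a - h - x)) 0 with hm
  have hmc : Continuous m := by
    apply Continuous.max _ continuous_const
    apply Continuous.sub
    · exact (continuous_const.mul (Real.continuous_sqrt.comp
        (continuous_const.sub continuous_id))).div_const 2
    · exact continuous_const.mul (Real.continuous_sqrt.comp
        (continuous_const.sub continuous_id))
  set x₁ : ℝ := a - h / q with hx₁
  have hx₁a : x₁ < a := by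
    have : 0 < h / q := div_pos hh0 hq0
    simp [hx₁]; linarith
  have hx₁0 : 0 < x₁ := by
    have : h / q < a / 2 := by rw [div_lt_iff₀ hq0]; nlinarith
    simp [hx₁]; linarith
  -- squaring helper
  have sqle : ∀ x : ℝ, x ≤ a → p * Real.sqrt (a - x) / 2 = Real.sqrt (p^2 * (a-x)/4) := by
    intro x hx
    rw [show p^2*(a-x)/4 = (p/2)^2 * (a-x) by ring, Real.sqrt_mul (by positivity),
      Real.sqrt_sq (by positivity)]
    ring
  have hsplit : ∫ x in (0:ℝ)..a, m x
      = (∫ x in (0:ℝ)..x₁, m x) + ∫ x in x₁..a, m x :=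
    (intervalIntegral.integral_add_adjacent_intervals
      (hmc.intervalIntegrable _ _) (hmc.intervalIntegrable _ _)).symm
  have hzero : (∫ x in (0:ℝ)..x₁, m x) = 0 := by
    rw [intervalIntegral.integral_congr (g := fun _ => (0:ℝ))]
    · simp
    · intro x hx
      rw [Set.uIcc_of_le hx₁0.le] at hx
      have hxa : x ≤ a := le_trans hx.2 hx₁a.le
      have key : p * Real.sqrt (a - x) / 2 ≤ Real.sqrt (a - h - x) := by
        rw [sqle x hxa]
        apply Real.sqrt_le_sqrt
        have hax : h / q ≤ a - x := by
          have := hx.2; simp only [hx₁] at this; linarith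
        have : h ≤ q * (a - x) := by
          rw [div_le_iff₀ hq0] at hax; linarith [hax]
        nlinarith
      have : p * Real.sqrt (2*a) * Real.sqrt (a - x) / 2
          ≤ Real.sqrt (2*a) * Real.sqrt (a - h - x) := by
        have := mul_le_mul_of_nonneg_left key (Real.sqrt_nonneg (2*a))
        nlinarith [this]
      simp only [hm]
      rw [max_eq_right (by linarith)]
  have hmain : (∫ x in x₁..a, m x)
      = (p * Real.sqrt (2*a) / 2) * (∫ x in x₁..a, Real.sqrt (a - x))
        - Real.sqrt (2*a) * ∫ x in x₁..a, Real.sqrt (a - h - x) := by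
    rw [← intervalIntegral.integral_const_mul, ← intervalIntegral.integral_const_mul,
      ← intervalIntegral.integral_sub]
    · apply intervalIntegral.integral_congr
      intro x hx
      rw [Set.uIcc_of_le hx₁a.le] at hx
      have hge : Real.sqrt (2*a) * Real.sqrt (a - h - x) ≤
          p * Real.sqrt (2*a) * Real.sqrt (a - x) / 2 := by
        by_cases hc : a - h - x ≤ 0
        · rw [Real.sqrt_eq_zero'.2 hc]
          have : 0 ≤ p * Real.sqrt (2*a) * Real.sqrt (a - x) / 2 := by positivity
          linarith
        · push_neg at hc
          have key : Real.sqrt (a - h - x) ≤ p * Real.sqrt (a - x) / 2 := by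
            rw [sqle x hx.2]
            apply Real.sqrt_le_sqrt
            have hax : a - x ≤ h / q := by
              have := hx.1; simp only [hx₁] at this; linarith
            have : q * (a - x) ≤ h := by
              rw [le_div_iff₀ hq0] at hax; linarith [hax]
            nlinarith
          have := mul_le_mul_of_nonneg_left key (Real.sqrt_nonneg (2*a))
          nlinarith [this]
      simp only [hm]
      rw [max_eq_left (by linarith)]
      ring
    · exact (Continuous.intervalIntegrable (by
        exact continuous_const.mul (Real.continuous_sqrt.comp
          (continuous_const.sub continuous_id))) _ _)
    · exact (Continuous.intervalIntegrable (by
        exact continuous_const.mul (Real.continuous_sqrt.comp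
          (continuous_const.sub continuous_id))) _ _)
  have hI1 : (∫ x in x₁..a, Real.sqrt (a - x)) = (2/3) * (h/q) * Real.sqrt (h/q) := by
    rw [intervalIntegral.integral_comp_sub_left (fun t => Real.sqrt t) a]
    have e1 : a - x₁ = h / q := by rw [hx₁]; ring
    rw [e1, sub_self]
    simp only [Real.sqrt_eq_rpow]
    rw [integral_rpow (Or.inl (by norm_num))]
    rw [Real.zero_rpow (by norm_num)]
    rw [show (1:ℝ)/2 + 1 = (3:ℝ)/2 by norm_num, rpow_tq (by positivity)]
    rw [← Real.sqrt_eq_rpow]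
    ring
  have hI2 : (∫ x in x₁..a, Real.sqrt (a - h - x))
      = (2/3) * (h/q - h) * Real.sqrt (h/q - h) := by
    rw [intervalIntegral.integral_comp_sub_left (fun t => Real.sqrt t) (a - h)]
    have e1 : a - h - x₁ = h / q - h := by rw [hx₁]; ring
    have e2 : a - h - a = -h := by ring
    rw [e1, e2]
    have hqh : 0 ≤ h / q - h := by
      rw [sub_nonneg, le_div_iff₀ hq0]; nlinarith
    rw [← intervalIntegral.integral_add_adjacent_intervals (b := 0)
      (Real.continuous_sqrt.intervalIntegrable _ _)
      (Real.continuous_sqrt.intervalIntegrable _ _)]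
    have hz : (∫ x in (-h)..(0:ℝ), Real.sqrt x) = 0 := by
      rw [intervalIntegral.integral_congr (g := fun _ => (0:ℝ))]
      · simp
      · intro x hx
        rw [Set.uIcc_of_le (by linarith : -h ≤ (0:ℝ))] at hx
        exact Real.sqrt_eq_zero'.2 hx.2
    rw [hz, zero_add]
    simp only [Real.sqrt_eq_rpow]
    rw [integral_rpow (Or.inl (by norm_num))]
    rw [Real.zero_rpow (by norm_num)]
    rw [show (1:ℝ)/2 + 1 = (3:ℝ)/2 by norm_num, rpow_tq hqh]
    rw [← Real.sqrt_eq_rpow]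
    ring
  rw [hsplit, hzero, zero_add, hmain, hI1, hI2]
  -- final algebra
  have e1 : Real.sqrt (h/q) = Real.sqrt h / Real.sqrt q := Real.sqrt_div hh0.le q
  have e2 : h / q - h = h * p^2 / (4*q) := by
    field_simp
    rw [hq]; ring
  have e3 : Real.sqrt (h * p^2 / (4*q)) = Real.sqrt h * p / (2 * Real.sqrt q) := by
    rw [Real.sqrt_div (by positivity), Real.sqrt_mul hh0.le,
      Real.sqrt_sq hp0.le, Real.sqrt_mul (by norm_num : (0:ℝ) ≤ 4), sqrt_four]
  have e4 : Real.sqrt (4 - p^2) = 2 * Real.sqrt q := by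
    rw [show (4:ℝ) - p^2 = 4*q by rw [hq]; ring,
      Real.sqrt_mul (by norm_num : (0:ℝ) ≤ 4), sqrt_four]
  rw [e2, e3, e4, e1, rpow_tq hh0.le]
  have hsq : Real.sqrt q ≠ 0 := by positivity
  field_simp
  rw [hq]; ring


lemma rpow_fq' {t : ℝ} (ht : 0 ≤ t) : t ^ ((5:ℝ)/2) = t^2 * Real.sqrt t := by
  rw [show (5:ℝ)/2 = 2 + 1/2 by norm_num, Real.rpow_add' ht (by norm_num), Real.sqrt_eq_rpow,
    show (2:ℝ) = ((2:ℕ):ℝ) by norm_num, Real.rpow_natCast]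

lemma sqrt_sub_sqrt_le {u v : ℝ} (hu : 0 ≤ u) (huv : u ≤ v) (hv : 0 < v) :
    Real.sqrt v - Real.sqrt u ≤ (v - u) / Real.sqrt v := by
  rw [le_div_iff₀ (Real.sqrt_pos.2 hv)]
  nlinarith [Real.sq_sqrt hu, Real.sq_sqrt hv.le, Real.sqrt_nonneg u,
    Real.sqrt_le_sqrt huv, Real.sqrt_nonneg v]

lemma compare_integrals (a p h q : ℝ) (ha : 0 < a) (hp0 : 0 < p) (hp2 : p < 2)
    (hq : q = 1 - p^2/4) (hh0 : 0 < h) (hh : h < q * a / 2) :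
    |(∫ x in (0:ℝ)..a, max (p * Real.sqrt (a^2 - x^2) / 2 - Real.sqrt ((a-h)^2 - x^2)) 0)
      - ∫ x in (0:ℝ)..a, max (p * Real.sqrt (2*a) * Real.sqrt (a - x) / 2
          - Real.sqrt (2*a) * Real.sqrt (a - h - x)) 0|
    ≤ (10 * Real.sqrt 2 / (q^2 * Real.sqrt q * Real.sqrt (2*a))) * h ^ ((5:ℝ)/2) := by
  have hq0 : 0 < q := by nlinarith
  have hq1 : q < 1 := by nlinarith
  set f : ℝ → ℝ := fun x => p * Real.sqrt (a^2 - x^2) / 2 with hf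
  set g : ℝ → ℝ := fun x => Real.sqrt ((a-h)^2 - x^2) with hg
  set ft : ℝ → ℝ := fun x => p * Real.sqrt (2*a) * Real.sqrt (a - x) / 2 with hft
  set gt : ℝ → ℝ := fun x => Real.sqrt (2*a) * Real.sqrt (a - h - x) with hgt
  set m₁ : ℝ → ℝ := fun x => max (f x - g x) 0 with hm₁
  set m₂ : ℝ → ℝ := fun x => max (ft x - gt x) 0 with hm₂
  have hm₁c : Continuous m₁ := by
    apply Continuous.max _ continuous_const
    apply Continuous.sub
    · exact (continuous_const.mul (Real.continuous_sqrt.comp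
        (continuous_const.sub (continuous_pow 2)))).div_const 2
    · exact Real.continuous_sqrt.comp (continuous_const.sub (continuous_pow 2))
  have hm₂c : Continuous m₂ := by
    apply Continuous.max _ continuous_const
    apply Continuous.sub
    · exact (continuous_const.mul (Real.continuous_sqrt.comp
        (continuous_const.sub continuous_id))).div_const 2
    · exact continuous_const.mul (Real.continuous_sqrt.comp
        (continuous_const.sub continuous_id))
  set u : ℝ := h / q with hu
  have huq : q * u = h := by rw [hu]; field_simp
  have hu0 : 0 < u := div_pos hh0 hq0
  have hua : u < a / 2 := by rw [hu, div_lt_iff₀ hq0]; nlinarith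
  have hhu : h ≤ u := by rw [hu, le_div_iff₀ hq0]; nlinarith
  have hha : h < a := by nlinarith
  set s : ℝ := a - 2 * u with hs
  have hs0 : 0 < s := by rw [hs]; linarith
  have hsa : s < a := by rw [hs]; linarith
  have hsub : (∫ x in (0:ℝ)..a, m₁ x) - (∫ x in (0:ℝ)..a, m₂ x)
      = ∫ x in (0:ℝ)..a, (m₁ x - m₂ x) :=
    (intervalIntegral.integral_sub (hm₁c.intervalIntegrable _ _)
      (hm₂c.intervalIntegrable _ _)).symm
  have hsplit : (∫ x in (0:ℝ)..a, (m₁ x - m₂ x))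
      = (∫ x in (0:ℝ)..s, (m₁ x - m₂ x)) + ∫ x in s..a, (m₁ x - m₂ x) :=
    (intervalIntegral.integral_add_adjacent_intervals
      ((hm₁c.sub hm₂c).intervalIntegrable _ _) ((hm₁c.sub hm₂c).intervalIntegrable _ _)).symm
  have hzero : (∫ x in (0:ℝ)..s, (m₁ x - m₂ x)) = 0 := by
    rw [intervalIntegral.integral_congr (g := fun _ => (0:ℝ))]
    · simp
    · intro x hx
      rw [Set.uIcc_of_le hs0.le] at hx
      obtain ⟨hx0, hxs⟩ := hx
      rw [hs] at hxs
      have hxa : x ≤ a := by linarith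
      have h1 : m₁ x = 0 := by
        simp only [hm₁]
        rw [max_eq_right]
        rw [sub_nonpos]
        have e1 : f x = Real.sqrt (p^2 * (a^2 - x^2) / 4) := by
          simp only [hf]
          rw [show p^2*(a^2-x^2)/4 = (p/2)^2 * (a^2-x^2) by ring,
            Real.sqrt_mul (by positivity), Real.sqrt_sq (by positivity)]
          ring
        rw [e1]
        apply Real.sqrt_le_sqrt
        have hp2q : p^2 = 4 * (1 - q) := by rw [hq]; ring
        rw [hp2q, ← huq]
        nlinarith [mul_nonneg (mul_nonneg hq0.le (by linarith : (0:ℝ) ≤ a - 2*u - x))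
            (by linarith : (0:ℝ) ≤ a - 2*u + x),
          mul_pos (mul_pos hq0 hu0) (by linarith : (0:ℝ) < 2*a + q*u - 4*u)]
      have h2 : m₂ x = 0 := by
        simp only [hm₂]
        rw [max_eq_right]
        rw [sub_nonpos]
        have key : p * Real.sqrt (a - x) / 2 ≤ Real.sqrt (a - h - x) := by
          have e1 : p * Real.sqrt (a-x) / 2 = Real.sqrt (p^2 * (a-x)/4) := by
            rw [show p^2*(a-x)/4 = (p/2)^2 * (a-x) by ring,
              Real.sqrt_mul (by positivity), Real.sqrt_sq (by positivity)]
            ring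
          rw [e1]
          apply Real.sqrt_le_sqrt
          have hp2q : p^2 = 4 * (1 - q) := by rw [hq]; ring
          rw [hp2q, ← huq]
          nlinarith [mul_pos hq0 hu0, mul_nonneg hq0.le (by linarith : (0:ℝ) ≤ a - 2*u - x)]
        calc ft x = Real.sqrt (2*a) * (p * Real.sqrt (a - x) / 2) := by
              simp only [hft]; ring
          _ ≤ Real.sqrt (2*a) * Real.sqrt (a - h - x) :=
              mul_le_mul_of_nonneg_left key (Real.sqrt_nonneg _)
          _ = gt x := rfl
      show m₁ x - m₂ x = 0
      rw [h1, h2, sub_zero]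
  set K : ℝ := 5 * u * Real.sqrt (2 * u) / Real.sqrt (2 * a) with hK
  have hbound : ∀ x ∈ Set.Ioc s a, |m₁ x - m₂ x| ≤ K := by
    intro x hx
    obtain ⟨hxs, hxa⟩ := hx
    rw [hs] at hxs
    have hx0 : 0 < x := by linarith
    have hax2 : a - x < 2 * u := by linarith
    have hax0 : 0 ≤ a - x := by linarith
    have h2a : (0:ℝ) < 2 * a := by linarith
    have hsq2a : 0 < Real.sqrt (2*a) := Real.sqrt_pos.2 h2a
    have hstep1 : |m₁ x - m₂ x| ≤ |(f x - g x) - (ft x - gt x)| :=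
      abs_max_sub_max_le_abs _ _ _
    have hstep2 : |(f x - g x) - (ft x - gt x)| ≤ |f x - ft x| + |g x - gt x| := by
      have e : (f x - g x) - (ft x - gt x) = (f x - ft x) - (g x - gt x) := by ring
      rw [e]
      exact abs_sub _ _
    have hB1 : |f x - ft x| ≤ Real.sqrt (2*u) * (2*u) / Real.sqrt (2*a) := by
      have ef : Real.sqrt (a^2 - x^2) = Real.sqrt (a - x) * Real.sqrt (a + x) := by
        rw [show a^2 - x^2 = (a-x)*(a+x) by ring, Real.sqrt_mul hax0]
      have hfle : f x ≤ ft x := by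
        simp only [hf, hft, ef]
        have h1 : Real.sqrt (a-x) * Real.sqrt (a+x) ≤ Real.sqrt (a-x) * Real.sqrt (2*a) :=
          mul_le_mul_of_nonneg_left (Real.sqrt_le_sqrt (by linarith)) (Real.sqrt_nonneg _)
        nlinarith [h1, hp0]
      rw [abs_of_nonpos (by linarith), neg_sub]
      have key : Real.sqrt (2*a) - Real.sqrt (a+x) ≤ 2*u / Real.sqrt (2*a) := by
        refine le_trans (sqrt_sub_sqrt_le (show (0:ℝ) ≤ a + x by linarith)
          (show a + x ≤ 2*a by linarith) h2a) ?_
        gcongr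
        linarith
      have e2 : ft x - f x = (p/2) * Real.sqrt (a-x) * (Real.sqrt (2*a) - Real.sqrt (a+x)) := by
        simp only [hf, hft, ef]; ring
      rw [e2]
      have h3 : Real.sqrt (a - x) ≤ Real.sqrt (2*u) := Real.sqrt_le_sqrt (by linarith)
      have h4 : 0 ≤ Real.sqrt (2*a) - Real.sqrt (a+x) := by
        rw [sub_nonneg]; exact Real.sqrt_le_sqrt (by linarith)
      calc (p/2) * Real.sqrt (a-x) * (Real.sqrt (2*a) - Real.sqrt (a+x))
          ≤ Real.sqrt (a-x) * (Real.sqrt (2*a) - Real.sqrt (a+x)) := by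
            nlinarith [mul_nonneg (Real.sqrt_nonneg (a-x)) h4, hp2]
        _ ≤ Real.sqrt (2*u) * (2*u / Real.sqrt (2*a)) :=
            mul_le_mul h3 key h4 (Real.sqrt_nonneg _)
        _ = Real.sqrt (2*u) * (2*u) / Real.sqrt (2*a) := by ring
    have hB2 : |g x - gt x| ≤ Real.sqrt (2*u) * (3*u) / Real.sqrt (2*a) := by
      by_cases hc : x ≤ a - h
      · have hahx : 0 ≤ a - h - x := by linarith
        have eg : g x = Real.sqrt (a - h - x) * Real.sqrt (a - h + x) := by
          simp only [hg]
          rw [show (a-h)^2 - x^2 = (a-h-x)*(a-h+x) by ring, Real.sqrt_mul hahx]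
        have hgle : g x ≤ gt x := by
          simp only [hgt]
          rw [eg]
          have h1 : Real.sqrt (a-h-x) * Real.sqrt (a-h+x)
              ≤ Real.sqrt (a-h-x) * Real.sqrt (2*a) :=
            mul_le_mul_of_nonneg_left (Real.sqrt_le_sqrt (by linarith)) (Real.sqrt_nonneg _)
          nlinarith [h1]
        rw [abs_of_nonpos (by linarith), neg_sub]
        have key2 : Real.sqrt (2*a) - Real.sqrt (a-h+x) ≤ 3*u / Real.sqrt (2*a) := by
          refine le_trans (sqrt_sub_sqrt_le (show (0:ℝ) ≤ a - h + x by linarith)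
            (show a - h + x ≤ 2*a by linarith) h2a) ?_
          gcongr
          linarith
        have e2 : gt x - g x
            = Real.sqrt (a-h-x) * (Real.sqrt (2*a) - Real.sqrt (a-h+x)) := by
          simp only [hgt]
          rw [eg]; ring
        rw [e2]
        have h3 : Real.sqrt (a-h-x) ≤ Real.sqrt (2*u) := Real.sqrt_le_sqrt (by linarith)
        have h4 : 0 ≤ Real.sqrt (2*a) - Real.sqrt (a-h+x) := by
          rw [sub_nonneg]; exact Real.sqrt_le_sqrt (by linarith)
        calc Real.sqrt (a-h-x) * (Real.sqrt (2*a) - Real.sqrt (a-h+x))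
            ≤ Real.sqrt (2*u) * (3*u / Real.sqrt (2*a)) :=
              mul_le_mul h3 key2 h4 (Real.sqrt_nonneg _)
          _ = Real.sqrt (2*u) * (3*u) / Real.sqrt (2*a) := by ring
      · push_neg at hc
        have hg0 : g x = 0 := by
          simp only [hg]
          apply Real.sqrt_eq_zero'.2
          nlinarith
        have hgt0 : gt x = 0 := by
          simp only [hgt]
          rw [Real.sqrt_eq_zero'.2 (by linarith : a - h - x ≤ 0), mul_zero]
        rw [hg0, hgt0, sub_zero, abs_zero]
        positivity
    calc |m₁ x - m₂ x| ≤ |f x - ft x| + |g x - gt x| := le_trans hstep1 hstep2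
      _ ≤ Real.sqrt (2*u) * (2*u) / Real.sqrt (2*a)
          + Real.sqrt (2*u) * (3*u) / Real.sqrt (2*a) := add_le_add hB1 hB2
      _ = K := by rw [hK]; ring
  have hnorm : |∫ x in s..a, (m₁ x - m₂ x)| ≤ K * |a - s| := by
    rw [← Real.norm_eq_abs]
    apply intervalIntegral.norm_integral_le_of_norm_le_const
    intro x hx
    rw [Set.uIoc_of_le hsa.le] at hx
    rw [Real.norm_eq_abs]
    exact hbound x hx
  have hfin : K * |a - s| = (10 * Real.sqrt 2 / (q^2 * Real.sqrt q * Real.sqrt (2*a)))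
      * h ^ ((5:ℝ)/2) := by
    have habs : |a - s| = 2 * u := by
      rw [hs, abs_of_pos (by linarith)]; ring
    rw [habs, hK, rpow_fq' hh0.le]
    have e1 : Real.sqrt (2 * u) = Real.sqrt 2 * Real.sqrt h / Real.sqrt q := by
      rw [hu, show 2 * (h/q) = 2*h/q by ring, Real.sqrt_div (by linarith),
        Real.sqrt_mul (by norm_num)]
    rw [e1, hu]
    have hsq : Real.sqrt q ≠ 0 := by positivity
    have hs2a : Real.sqrt (2*a) ≠ 0 := by positivity
    field_simp
    ring
  calc |(∫ x in (0:ℝ)..a, m₁ x) - ∫ x in (0:ℝ)..a, m₂ x|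
      = |∫ x in s..a, (m₁ x - m₂ x)| := by rw [hsub, hsplit, hzero, zero_add]
    _ ≤ K * |a - s| := hnorm
    _ = _ := hfin

/-- The area of the cap cut from the region `F_p` below the scaled ellipse boundary by the
disk of radius `a - h` is `c(p) h^{3/2} + O(h^{5/2})` as `h → 0⁺`. -/
theorem statement6 (a p : ℝ) (ha : 0 < a) (hp : p ∈ Set.Ioo (0 : ℝ) 2) :
    ∃ C > (0 : ℝ), ∃ h₀ > (0 : ℝ), ∀ h ∈ Set.Ioo 0 h₀,
      |(volume ({z : Pt | 0 ≤ z 0 ∧ z 0 ≤ a ∧ 0 ≤ z 1 ∧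
            z 1 ≤ p * Real.sqrt (a ^ 2 - z 0 ^ 2) / 2} \
          Metric.closedBall 0 (a - h))).toReal -
        2 * p * Real.sqrt (2 * a) / (3 * Real.sqrt (4 - p ^ 2)) * h ^ ((3 : ℝ) / 2)| ≤
      C * h ^ ((5 : ℝ) / 2) := by
  obtain ⟨hp0, hp2⟩ := hp
  set q : ℝ := 1 - p ^ 2 / 4 with hqdef
  have hq0 : 0 < q := by rw [hqdef]; nlinarith
  have hCpos : 0 < 10 * Real.sqrt 2 / (q ^ 2 * Real.sqrt q * Real.sqrt (2 * a)) := by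
    apply div_pos (by positivity)
    exact mul_pos (mul_pos (pow_pos hq0 2) (Real.sqrt_pos.2 hq0))
      (Real.sqrt_pos.2 (by linarith))
  refine ⟨10 * Real.sqrt 2 / (q ^ 2 * Real.sqrt q * Real.sqrt (2 * a)), hCpos,
    q * a / 2, by positivity, ?_⟩
  intro h hmem
  obtain ⟨hh0, hh1⟩ := hmem
  have hq1 : q ≤ 1 := by rw [hqdef]; nlinarith
  have hha : h < a := by nlinarith
  have hr : 0 ≤ a - h := by linarith
  rw [volume_cap a p (a - h) ha hp0.le hr,
    ENNReal.toReal_ofReal (intervalIntegral.integral_nonneg ha.le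
      (fun x _ => le_max_right _ _)),
    ← model_integral a p h q ha hp0 hp2 hqdef hh0 hh1]
  exact compare_integrals a p h q ha hp0 hp2 hqdef hh0 hh1

end
end

section
/- Under assumptions A1–A6, for each i ∈ {1,2,3,4} and all sufficiently small h > 0 define γ_i(h) := arctan(√((a−h)² − x̄_i(h)²)/|x̄_i(h)|), the acute angle between the horizontal axis and the ray from the origin through the unique intersection point of the graph of g_i with ∂B(h). Then γ_i(h)/(τ_i h^{1/2}) → 1 as h → 0⁺, where τ_i := q_i √(2a)/(a √(4 − q_i²)). -/
open MeasureTheory ProbabilityTheory Set Filter Topology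

noncomputable section

/-- The `i`-th open quadrant (`0`-based; `quadrant 0` is the first quadrant, numbering
anti-clockwise). -/
def quadrant : Fin 4 → Set Pt
  | 0 => {z | 0 < z 0 ∧ 0 < z 1}
  | 1 => {z | z 0 < 0 ∧ 0 < z 1}
  | 2 => {z | z 0 < 0 ∧ z 1 < 0}
  | 3 => {z | 0 < z 0 ∧ z 1 < 0}

/-- The domain of the boundary function of the `i`-th quadrant. -/
def bdom (a ν : ℝ) : Fin 4 → Set ℝ
  | 0 => Icc ν a
  | 1 => Icc (-a) (-ν)
  | 2 => Icc (-a) (-ν)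
  | 3 => Icc ν a

/-- The 'upper boundary function' `f_a` of an ellipse with major axis `2a` and minor axis `a`. -/
def fa (a x : ℝ) : ℝ := Real.sqrt (a ^ 2 - x ^ 2) / 2

/-- Assumptions A1–A6 on the compact set `E ⊆ ℝ²`.  Quadrants and boundary functions are
indexed `0`-based by `Fin 4`, so index `i` corresponds to quadrant `i+1` of the paper. -/
structure DomainAssumptions where
  E : Set Pt
  a : ℝ
  ν : ℝ
  g : Fin 4 → ℝ → ℝ
  q : Fin 4 → ℝ
  xbar : ℝ → Fin 4 → ℝ
  h₀ : ℝ
  ha : 0 < a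
  hE : IsCompact E
  hν : ν ∈ Ico 0 a
  -- A1
  a1_diam : Metric.diam E = 2 * a
  a1_inf : IsGLB ((fun z : Pt => z 0) '' E) (-a)
  a1_sup : IsLUB ((fun z : Pt => z 0) '' E) a
  -- A2
  a2 : ∀ ε > 0, Metric.diam (E \ (Metric.ball (pt (-a) 0) ε ∪ Metric.ball (pt a 0) ε)) < 2 * a
  -- A3
  a3_right : ∀ ε > 0, ∀ i ∈ ({0, 3} : Set (Fin 4)),
      0 < volume (E ∩ quadrant i ∩ Metric.ball (pt a 0) ε)
  a3_left : ∀ ε > 0, ∀ i ∈ ({1, 2} : Set (Fin 4)),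
      0 < volume (E ∩ quadrant i ∩ Metric.ball (pt (-a) 0) ε)
  -- A4
  a4_cont : ∀ i, ContinuousOn (g i) (bdom a ν i)
  a4_upper : ∀ i ∈ ({0, 1} : Set (Fin 4)), ∀ x ∈ bdom a ν i, 0 ≤ g i x
  a4_lower : ∀ i ∈ ({2, 3} : Set (Fin 4)), ∀ x ∈ bdom a ν i, g i x ≤ 0
  a4_zero_right : g 0 a = 0 ∧ g 3 a = 0
  a4_zero_left : g 1 (-a) = 0 ∧ g 2 (-a) = 0
  a4_right : interior E ∩ {z : Pt | ν < z 0} =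
      {z : Pt | ν < z 0 ∧ z 0 < a ∧ g 3 (z 0) < z 1 ∧ z 1 < g 0 (z 0)}
  a4_left : interior E ∩ {z : Pt | z 0 < -ν} =
      {z : Pt | -a < z 0 ∧ z 0 < -ν ∧ g 2 (z 0) < z 1 ∧ z 1 < g 1 (z 0)}
  -- A5
  hq : ∀ i, q i ∈ Ioo (0 : ℝ) 2
  a5_0 : Tendsto (fun x => g 0 x / fa a x) (𝓝[<] a) (𝓝 (q 0))
  a5_3 : Tendsto (fun x => -g 3 x / fa a x) (𝓝[<] a) (𝓝 (q 3))
  a5_1 : Tendsto (fun x => g 1 x / fa a x) (𝓝[>] (-a)) (𝓝 (q 1))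
  a5_2 : Tendsto (fun x => -g 2 x / fa a x) (𝓝[>] (-a)) (𝓝 (q 2))
  -- A6
  hh₀ : 0 < h₀
  a6_inside : ∀ h ∈ Ioo 0 h₀, ∀ i,
      interior (E ∩ quadrant i) ∩ {z : Pt | |z 0| < ν} ⊆ Metric.closedBall 0 (a - h)
  a6_unique : ∀ h ∈ Ioo 0 h₀, ∀ i,
      {x | x ∈ bdom a ν i ∧ x ^ 2 + g i x ^ 2 = (a - h) ^ 2} = {xbar h i}

namespace DomainAssumptions

variable (A : DomainAssumptions)

/-- The constant `c_i`. -/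
def cConst (i : Fin 4) : ℝ := 2 * A.q i * Real.sqrt (2 * A.a) / (3 * Real.sqrt (4 - A.q i ^ 2))

/-- The constant `τ_i`. -/
def tauConst (i : Fin 4) : ℝ := 3 / (2 * A.a) * A.cConst i

/-- The end cap `A_i(h) = E_i \ B(h)`. -/
def cap (i : Fin 4) (h : ℝ) : Set Pt := (A.E ∩ quadrant i) \ Metric.closedBall 0 (A.a - h)

end DomainAssumptions

/-- Assumptions A1–A7: the domain assumptions together with a density `f` supported by `E`,
continuous and positive at the poles. -/
structure ModelAssumptions extends DomainAssumptions where
  f : Pt → ℝ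
  ε₀ : ℝ
  hf_nonneg : ∀ z, 0 ≤ f z
  hf_meas : Measurable f
  hf_prob : ∫⁻ z, ENNReal.ofReal (f z) = 1
  hf_supp : ∀ z, z ∉ E → f z = 0
  hε₀ : 0 < ε₀
  hf_cont_right : ∀ ε ∈ Ioo 0 ε₀, ContinuousOn f (E ∩ Metric.ball (pt a 0) ε)
  hf_cont_left : ∀ ε ∈ Ioo 0 ε₀, ContinuousOn f (E ∩ Metric.ball (pt (-a) 0) ε)
  hp_right : 0 < f (pt a 0)
  hp_left : 0 < f (pt (-a) 0)

namespace ModelAssumptions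

variable (A : ModelAssumptions)

/-- The density value `p_i` at the pole of the `i`-th quadrant. -/
def p : Fin 4 → ℝ
  | 0 => A.f (pt A.a 0)
  | 1 => A.f (pt (-A.a) 0)
  | 2 => A.f (pt (-A.a) 0)
  | 3 => A.f (pt A.a 0)

/-- The constant `σ_i = (p_i c_i)^{-2/3}`. -/
def sigConst (i : Fin 4) : ℝ := (A.p i * A.cConst i) ^ (-(2 / 3) : ℝ)

/-- The law of a single sample point: the measure with density `f` w.r.t. Lebesgue measure. -/
def law : Measure Pt := volume.withDensity fun z => ENNReal.ofReal (A.f z)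

end ModelAssumptions

/-- The unit-exponential distribution on `ℝ`. -/
def expLaw : Measure ℝ :=
  volume.withDensity fun y => ENNReal.ofReal (if 0 ≤ y then Real.exp (-y) else 0)

/-- The uniform distribution on `[0,1]`. -/
def uniformLaw : Measure ℝ := volume.restrict (Icc 0 1)

/-- Auxiliary data for the limit distribution: four independent families
`Y^i_m` (i.i.d. unit-exponential) and `U^i_m` (i.i.d. uniform on `[0,1]`),
all jointly independent. -/
structure NAData (Ω' : Type*) [MeasurableSpace Ω'] (P' : Measure Ω') where
  Y : Fin 4 → ℕ → Ω' → ℝ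
  U : Fin 4 → ℕ → Ω' → ℝ
  Ymeas : ∀ i m, Measurable (Y i m)
  Umeas : ∀ i m, Measurable (U i m)
  indep : iIndepFun
      (Sum.elim (fun p : Fin 4 × ℕ => Y p.1 p.2) (fun p : Fin 4 × ℕ => U p.1 p.2)) P'
  Ylaw : ∀ i m, P'.map (Y i m) = expLaw
  Ulaw : ∀ i m, P'.map (U i m) = uniformLaw

namespace NAData

variable {Ω' : Type*} [MeasurableSpace Ω'] {P' : Measure Ω'} (D : NAData Ω' P')

/-- `S^i_m = Y^i_1 + … + Y^i_{m+1}` (`0`-based, so `S i 0` is the paper's `S_1`). -/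
def S (i : Fin 4) (m : ℕ) (ω : Ω') : ℝ := ∑ j ∈ Finset.range (m + 1), D.Y i j ω

/-- `Z^i_{1,m} = σ_i S_m^{2/3}`. -/
def Z1 (sig : Fin 4 → ℝ) (i : Fin 4) (m : ℕ) (ω : Ω') : ℝ := sig i * D.S i m ω ^ ((2 : ℝ) / 3)

/-- `Z^i_{2,m} = U_m τ_i σ_i^{1/2} S_m^{1/3}`. -/
def Z2 (sig tau : Fin 4 → ℝ) (i : Fin 4) (m : ℕ) (ω : Ω') : ℝ :=
  D.U i m ω * tau i * Real.sqrt (sig i) * D.S i m ω ^ ((1 : ℝ) / 3)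

/-- `S^{i,j}` for opposite quadrants (`(1,3)` and `(2,4)` in the paper's numbering). -/
def Sopp (a : ℝ) (sig tau : Fin 4 → ℝ) (i j : Fin 4) (ω : Ω') : ℝ :=
  ⨅ kl : ℕ × ℕ, (D.Z1 sig i kl.1 ω + D.Z1 sig j kl.2 ω +
    a / 4 * (D.Z2 sig tau i kl.1 ω - D.Z2 sig tau j kl.2 ω) ^ 2)

/-- `S^{i,j}` for adjacent quadrants (`(1,2)` and `(3,4)` in the paper's numbering). -/
def Sadj (a : ℝ) (sig tau : Fin 4 → ℝ) (i j : Fin 4) (ω : Ω') : ℝ :=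
  ⨅ kl : ℕ × ℕ, (D.Z1 sig i kl.1 ω + D.Z1 sig j kl.2 ω +
    a / 4 * (D.Z2 sig tau i kl.1 ω + D.Z2 sig tau j kl.2 ω) ^ 2)

/-- The limit random variable `min {S^{1,2}, S^{1,3}, S^{2,4}, S^{3,4}}`. -/
def L (a : ℝ) (sig tau : Fin 4 → ℝ) (ω : Ω') : ℝ :=
  min (min (D.Sadj a sig tau 0 1 ω) (D.Sopp a sig tau 0 2 ω))
    (min (D.Sopp a sig tau 1 3 ω) (D.Sadj a sig tau 2 3 ω))

end NAData

/-- Convergence in distribution (along `atTop` on `ℕ`) of `α`-valued random variables `X n`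
(defined on `(Ω, P)`) to the law of `L` (defined on `(Ω', P')`), expressed by convergence of
integrals of bounded continuous functions. -/
def ConvInDist {α : Type*} [TopologicalSpace α] {Ω : Type*} [MeasurableSpace Ω] (P : Measure Ω)
    {Ω' : Type*} [MeasurableSpace Ω'] (P' : Measure Ω') (X : ℕ → Ω → α) (L : Ω' → α) : Prop :=
  ∀ g : BoundedContinuousFunction α ℝ,
    Tendsto (fun n => ∫ ω, g (X n ω) ∂P) atTop (𝓝 (∫ ω', g (L ω') ∂P'))


set_option maxHeartbeats 1000000 in
private lemma statement7_core (a ν q : ℝ) (ha : 0 < a) (hνa : ν < a) (hν0 : 0 ≤ ν)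
    (hq0 : 0 < q) (hq2 : q < 2)
    (G : ℝ → ℝ) (hGc : ContinuousOn G (Set.Icc ν a))
    (hGnn : ∀ x ∈ Set.Icc ν a, 0 ≤ G x)
    (hlim : Tendsto (fun x => G x / fa a x) (𝓝[<] a) (𝓝 q))
    (X : ℝ → ℝ) (h₀ : ℝ) (hh₀ : 0 < h₀)
    (huniq : ∀ h ∈ Set.Ioo 0 h₀,
      {x | x ∈ Set.Icc ν a ∧ x ^ 2 + G x ^ 2 = (a - h) ^ 2} = {X h}) :
    Tendsto (fun h => Real.arctan (Real.sqrt ((a - h) ^ 2 - X h ^ 2) / |X h|) /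
        (q * Real.sqrt (2 * a) / (a * Real.sqrt (4 - q ^ 2)) * h ^ ((1 : ℝ) / 2)))
      (𝓝[>] 0) (𝓝 1) := by
  have hq4 : 0 < 4 - q ^ 2 := by nlinarith
  set τ := q * Real.sqrt (2 * a) / (a * Real.sqrt (4 - q ^ 2)) with hτdef
  have hτpos : 0 < τ :=
    div_pos (mul_pos hq0 (Real.sqrt_pos.2 (by linarith))) (mul_pos ha (Real.sqrt_pos.2 hq4))
  -- X h satisfies the defining equation eventually
  have heq : ∀ᶠ h in 𝓝[>] (0:ℝ), X h ∈ Set.Icc ν a ∧ X h ^ 2 + G (X h) ^ 2 = (a - h) ^ 2 := by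
    filter_upwards [Ioo_mem_nhdsGT_of_mem (by exact ⟨le_refl 0, hh₀⟩ : (0:ℝ) ∈ Ico 0 h₀)]
      with h hh
    have := (Set.ext_iff.mp (huniq h hh) (X h)).mpr rfl
    exact this
  -- X h is eventually close to a
  have hXnear : ∀ ε > (0:ℝ), ∀ᶠ h in 𝓝[>] (0:ℝ), X h ∈ Set.Ioo (a - ε) a := by
    intro ε hε
    -- pick x₁ close to a with x₁² + G x₁² < a²
    have h2 : ∀ᶠ x in 𝓝[<] a, G x / fa a x < 2 := hlim.eventually_lt_const hq2
    have h3 : ∀ᶠ x in 𝓝[<] a, max ν (a - ε) < x :=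
      eventually_nhdsWithin_of_eventually_nhds
        (eventually_gt_nhds (max_lt hνa (by linarith)))
    have h4 : ∀ᶠ x in 𝓝[<] a, x < a := self_mem_nhdsWithin
    obtain ⟨x₁, hx₁2, hx₁3, hx₁4⟩ := (h2.and (h3.and h4)).exists
    have hx₁ν : ν ≤ x₁ := le_of_lt (lt_of_le_of_lt (le_max_left _ _) hx₁3)
    have hx₁0 : 0 ≤ x₁ := le_trans hν0 hx₁ν
    have hax : 0 < a ^ 2 - x₁ ^ 2 := by nlinarith
    have hfapos : 0 < fa a x₁ := by
      unfold fa; positivity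
    have hφ1 : x₁ ^ 2 + G x₁ ^ 2 < a ^ 2 := by
      have hGlt : G x₁ < Real.sqrt (a ^ 2 - x₁ ^ 2) := by
        have := (div_lt_iff₀ hfapos).mp hx₁2
        unfold fa at this; linarith
      have hGnn' : 0 ≤ G x₁ := hGnn x₁ ⟨hx₁ν, le_of_lt hx₁4⟩
      have : G x₁ ^ 2 < a ^ 2 - x₁ ^ 2 := by
        have h5 := Real.sq_sqrt hax.le
        nlinarith [hGlt, hGnn']
      linarith
    set s := Real.sqrt (x₁ ^ 2 + G x₁ ^ 2) with hsdef
    have hs0 : 0 ≤ s := Real.sqrt_nonneg _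
    have hsa : s < a := (Real.sqrt_lt' ha).2 hφ1
    filter_upwards [Ioo_mem_nhdsGT_of_mem
      (⟨le_refl 0, lt_min hh₀ (by linarith)⟩ : (0:ℝ) ∈ Ico 0 (min h₀ (a - s)))] with h hh
    obtain ⟨hh1, hh2⟩ := hh
    have hhh₀ : h < h₀ := lt_of_lt_of_le hh2 (min_le_left _ _)
    have hhs : h < a - s := lt_of_lt_of_le hh2 (min_le_right _ _)
    have hahs : s < a - h := by linarith
    have hah0 : 0 ≤ a - h := le_trans hs0 hahs.le
    have hlow : x₁ ^ 2 + G x₁ ^ 2 < (a - h) ^ 2 := by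
      have := Real.sq_sqrt (by positivity : (0:ℝ) ≤ x₁ ^ 2 + G x₁ ^ 2)
      nlinarith [hahs, hs0]
    have hhigh : (a - h) ^ 2 < a ^ 2 + G a ^ 2 := by nlinarith [sq_nonneg (G a)]
    -- IVT
    have hφcont : ContinuousOn (fun x => x ^ 2 + G x ^ 2) (Set.Icc x₁ a) := by
      have hsub : Set.Icc x₁ a ⊆ Set.Icc ν a := Set.Icc_subset_Icc hx₁ν le_rfl
      exact ((continuous_pow 2).continuousOn).add ((hGc.mono hsub).pow 2)
    have := intermediate_value_Icc hx₁4.le hφcont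
      (⟨hlow.le, hhigh.le⟩ : (a - h) ^ 2 ∈ Set.Icc (x₁ ^ 2 + G x₁ ^ 2) (a ^ 2 + G a ^ 2))
    obtain ⟨x, hxmem, hφx'⟩ := this
    have hφx : x ^ 2 + G x ^ 2 = (a - h) ^ 2 := hφx'
    have hxIcc : x ∈ Set.Icc ν a := ⟨le_trans hx₁ν hxmem.1, hxmem.2⟩
    have hxX : x = X h := by
      have := (Set.ext_iff.mp (huniq h ⟨hh1, hhh₀⟩) x).mp ⟨hxIcc, hφx⟩
      exact this
    have hxa : x < a := by
      rcases lt_or_eq_of_le hxmem.2 with h' | h'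
      · exact h'
      · exfalso; rw [h'] at hφx; linarith
    rw [← hxX]
    exact ⟨lt_of_le_of_lt (le_max_right ν (a - ε)) (lt_of_lt_of_le hx₁3 hxmem.1), hxa⟩
  -- X tends to a from below
  have hXa : Tendsto X (𝓝[>] (0:ℝ)) (𝓝[<] a) := by
    rw [tendsto_nhdsWithin_iff]
    constructor
    · rw [tendsto_order]
      constructor
      · intro b hb
        filter_upwards [hXnear (a - b) (by linarith)] with h hh
        have := hh.1; linarith
      · intro b hb
        filter_upwards [hXnear a ha] with h hh
        exact lt_trans hh.2 hb
    · filter_upwards [hXnear a ha] with h hh using hh.2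
  have hr : Tendsto (fun h => G (X h) / fa a (X h)) (𝓝[>] (0:ℝ)) (𝓝 q) := hlim.comp hXa
  obtain ⟨T, hTdef⟩ : ∃ T : ℝ → ℝ, T = fun h => G (X h) / X h := ⟨_, rfl⟩
  obtain ⟨W, hWdef⟩ : ∃ W : ℝ → ℝ, W = fun h => (G (X h) / fa a (X h)) *
      Real.sqrt ((2 * a - h) / (1 - (G (X h) / fa a (X h)) ^ 2 / 4)) / (2 * X h) := ⟨_, rfl⟩
  -- the key pointwise facts
  have hKey : ∀ᶠ h in 𝓝[>] (0:ℝ),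
      (Real.sqrt ((a - h) ^ 2 - X h ^ 2) / |X h| = T h) ∧
      (T h / Real.sqrt h = W h) ∧ 0 < T h := by
    filter_upwards [heq, hXnear (a/2) (by linarith), hr.eventually_lt_const hq2,
      hr.eventually_const_lt (by linarith : q/2 < q),
      Ioo_mem_nhdsGT_of_mem (⟨le_refl 0, ha⟩ : (0:ℝ) ∈ Ico 0 a)] with h h1 h2 h3 h4 h5
    obtain ⟨hmem, heqn⟩ := h1
    obtain ⟨hxlow, hxa⟩ := h2
    obtain ⟨hh0, hha⟩ := h5
    have hTx : T h = G (X h) / X h := by rw [hTdef]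
    have hWx : W h = (G (X h) / fa a (X h)) *
        Real.sqrt ((2 * a - h) / (1 - (G (X h) / fa a (X h)) ^ 2 / 4)) / (2 * X h) := by
      rw [hWdef]
    set x := X h with hxdef
    clear_value x
    have hx0 : 0 < x := by linarith
    have hax2 : 0 < a ^ 2 - x ^ 2 := by nlinarith
    have hfapos : 0 < fa a x := by unfold fa; positivity
    have hfane : fa a x ≠ 0 := ne_of_gt hfapos
    set r := G x / fa a x with hrdef
    clear_value r
    have hGnn' : 0 ≤ G x := hGnn x hmem
    have hr0 : 0 ≤ r := by rw [hrdef]; exact div_nonneg hGnn' hfapos.le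
    have hGeq : G x = r * fa a x := by rw [hrdef]; exact (div_mul_cancel₀ _ hfane).symm
    have hfasq : fa a x ^ 2 = (a ^ 2 - x ^ 2) / 4 := by
      unfold fa
      rw [div_pow, Real.sq_sqrt hax2.le]
      norm_num
    have hGsq : G x ^ 2 = r ^ 2 * (a ^ 2 - x ^ 2) / 4 := by
      rw [hGeq, mul_pow, hfasq]; ring
    have hr2 : r ^ 2 < 4 := by
      rw [sq]
      have := mul_self_lt_mul_self hr0 h3
      linarith
    have hdenpos : 0 < 1 - r ^ 2 / 4 := by linarith
    have hkey : (a ^ 2 - x ^ 2) * (1 - r ^ 2 / 4) = h * (2 * a - h) := by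
      linear_combination -heqn + hGsq
    have hGpos : 0 < G x := by
      rw [hGeq]; exact mul_pos (by linarith) hfapos
    have hsqrtG : Real.sqrt ((a - h) ^ 2 - x ^ 2) = G x := by
      rw [show (a - h) ^ 2 - x ^ 2 = G x ^ 2 by linarith, Real.sqrt_sq hGnn']
    have hQ : Real.sqrt (a ^ 2 - x ^ 2) =
        Real.sqrt h * Real.sqrt ((2 * a - h) / (1 - r ^ 2 / 4)) := by
      rw [← Real.sqrt_mul hh0.le]
      congr 1
      rw [← mul_div_assoc, eq_div_iff (ne_of_gt hdenpos)]
      linarith [hkey]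
    refine ⟨?_, ?_, ?_⟩
    · rw [hsqrtG, abs_of_pos hx0, hTx]
    · have hGval : G x = r * (Real.sqrt h * Real.sqrt ((2 * a - h) / (1 - r ^ 2 / 4))) / 2 := by
        rw [hGeq]
        unfold fa
        rw [hQ]; ring
      have hsh : Real.sqrt h ≠ 0 := ne_of_gt (Real.sqrt_pos.2 hh0)
      rw [hWx, hTx, hGval]
      show r * (Real.sqrt h * Real.sqrt ((2 * a - h) / (1 - r ^ 2 / 4))) / 2 / x / Real.sqrt h
          = r * Real.sqrt ((2 * a - h) / (1 - r ^ 2 / 4)) / (2 * x)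
      field_simp
    · rw [hTx]; exact div_pos hGpos hx0
  -- limit of W
  have hXaa : Tendsto X (𝓝[>] (0:ℝ)) (𝓝 a) := hXa.mono_right nhdsWithin_le_nhds
  have hWlim : Tendsto W (𝓝[>] (0:ℝ)) (𝓝 τ) := by
    have h2a : Tendsto (fun h : ℝ => 2 * a - h) (𝓝[>] (0:ℝ)) (𝓝 (2 * a)) := by
      have : Tendsto (fun h : ℝ => 2 * a - h) (𝓝 (0:ℝ)) (𝓝 (2 * a - 0)) :=
        tendsto_const_nhds.sub tendsto_id
      simpa using this.mono_left nhdsWithin_le_nhds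
    have hden : Tendsto (fun h => 1 - (G (X h) / fa a (X h)) ^ 2 / 4) (𝓝[>] (0:ℝ))
        (𝓝 (1 - q ^ 2 / 4)) := tendsto_const_nhds.sub ((hr.pow 2).div_const 4)
    have hdenne : (1 : ℝ) - q ^ 2 / 4 ≠ 0 := by nlinarith
    have h2ane : (2 : ℝ) * a ≠ 0 := by positivity
    have hmain := (hr.mul ((Real.continuous_sqrt.tendsto _).comp (h2a.div hden hdenne))).div
      (hXaa.const_mul 2) h2ane
    have hval : q * Real.sqrt (2 * a / (1 - q ^ 2 / 4)) / (2 * a) = τ := by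
      have hQ2 : Real.sqrt (2 * a / (1 - q ^ 2 / 4)) =
          2 * Real.sqrt (2 * a) / Real.sqrt (4 - q ^ 2) := by
        rw [show 2 * a / (1 - q ^ 2 / 4) =
            (2 * Real.sqrt (2 * a) / Real.sqrt (4 - q ^ 2)) ^ 2 from ?_,
          Real.sqrt_sq (by positivity)]
        rw [div_pow, mul_pow, Real.sq_sqrt (by linarith : (0:ℝ) ≤ 2 * a),
          Real.sq_sqrt hq4.le]
        have h4ne : Real.sqrt (4 - q ^ 2) ≠ 0 := ne_of_gt (Real.sqrt_pos.2 hq4)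
        field_simp
        ring
      rw [hQ2, hτdef]
      have h4ne : Real.sqrt (4 - q ^ 2) ≠ 0 := ne_of_gt (Real.sqrt_pos.2 hq4)
      field_simp
    rw [hval] at hmain
    rw [hWdef]
    exact hmain
  -- T h / √h → τ
  have htdiv : Tendsto (fun h => T h / Real.sqrt h) (𝓝[>] (0:ℝ)) (𝓝 τ) := by
    apply hWlim.congr'
    filter_upwards [hKey] with h hh using hh.2.1.symm
  -- T → 0
  have hsqrt0 : Tendsto (fun h : ℝ => Real.sqrt h) (𝓝[>] (0:ℝ)) (𝓝 0) := by
    have := (Real.continuous_sqrt.tendsto 0).mono_left (nhdsWithin_le_nhds (s := Set.Ioi (0:ℝ)))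
    simpa using this
  have hT0 : Tendsto T (𝓝[>] (0:ℝ)) (𝓝 0) := by
    have := htdiv.mul hsqrt0
    rw [mul_zero] at this
    apply this.congr'
    filter_upwards [Ioo_mem_nhdsGT_of_mem (⟨le_refl 0, ha⟩ : (0:ℝ) ∈ Ico 0 a)] with h hh
    have hsh : Real.sqrt h ≠ 0 := ne_of_gt (Real.sqrt_pos.2 hh.1)
    exact div_mul_cancel₀ _ hsh
  have hTne : Tendsto T (𝓝[>] (0:ℝ)) (𝓝[≠] (0:ℝ)) := by
    apply tendsto_nhdsWithin_of_tendsto_nhds_of_eventually_within _ hT0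
    filter_upwards [hKey] with h hh using ne_of_gt hh.2.2
  -- arctan u / u → 1
  have harc : Tendsto (fun u => Real.arctan u / u) (𝓝[≠] (0:ℝ)) (𝓝 1) := by
    have h1 := hasDerivAt_iff_tendsto_slope.mp (Real.hasDerivAt_arctan 0)
    have h2 : Tendsto (fun u => Real.arctan u / u) (𝓝[≠] (0:ℝ)) (𝓝 (1 / (1 + 0 ^ 2))) := by
      refine Tendsto.congr (fun u => ?_) h1
      simp [slope_def_field, Real.arctan_zero]
    simpa using h2
  have harcT : Tendsto (fun h => Real.arctan (T h) / T h) (𝓝[>] (0:ℝ)) (𝓝 1) :=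
    harc.comp hTne
  -- conclusion
  have hfinal := (harcT.mul htdiv).mul_const τ⁻¹
  have hτne : τ ≠ 0 := ne_of_gt hτpos
  rw [show (1:ℝ) * τ * τ⁻¹ = 1 by field_simp] at hfinal
  apply hfinal.congr'
  filter_upwards [hKey, Ioo_mem_nhdsGT_of_mem (⟨le_refl 0, ha⟩ : (0:ℝ) ∈ Ico 0 a)]
    with h hh hh2
  rw [← Real.sqrt_eq_rpow, hh.1]
  have hsh : Real.sqrt h ≠ 0 := ne_of_gt (Real.sqrt_pos.2 hh2.1)
  have hTne' : T h ≠ 0 := ne_of_gt hh.2.2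
  field_simp

set_option maxHeartbeats 1000000 in
/-- **Lemma 2.** Under assumptions A1–A6, the polar angle `γ_i(h)` of the intersection point
of the boundary function `g_i` with the circle of radius `a - h` satisfies
`γ_i(h) ~ τ_i h^{1/2}` as `h → 0⁺`, where `τ_i = q_i √(2a)/(a √(4 - q_i²))`. -/
theorem statement7 (A : DomainAssumptions) (i : Fin 4) :
    Tendsto (fun h =>
        Real.arctan (Real.sqrt ((A.a - h) ^ 2 - A.xbar h i ^ 2) / |A.xbar h i|) /
          (A.q i * Real.sqrt (2 * A.a) / (A.a * Real.sqrt (4 - A.q i ^ 2)) *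
            h ^ ((1 : ℝ) / 2)))
      (𝓝[>] 0) (𝓝 1) := by
  have ha := A.ha
  have hν1 := A.hν.1
  have hν2 := A.hν.2
  have hb0 : bdom A.a A.ν 0 = Set.Icc A.ν A.a := rfl
  have hb1 : bdom A.a A.ν 1 = Set.Icc (-A.a) (-A.ν) := rfl
  have hb2 : bdom A.a A.ν 2 = Set.Icc (-A.a) (-A.ν) := rfl
  have hb3 : bdom A.a A.ν 3 = Set.Icc A.ν A.a := rfl
  have hneg : Tendsto (fun x : ℝ => -x) (𝓝[<] A.a) (𝓝[>] (-A.a)) := by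
    refine tendsto_nhdsWithin_of_tendsto_nhds_of_eventually_within _
      ((continuous_neg.tendsto A.a).mono_left nhdsWithin_le_nhds) ?_
    filter_upwards [self_mem_nhdsWithin] with x hx
    have hx' : x < A.a := hx
    simpa using neg_lt_neg hx'
  have hfaeven : ∀ x : ℝ, fa A.a (-x) = fa A.a x := by
    intro x; simp [fa, neg_sq]
  fin_cases i
  · -- quadrant 1
    exact statement7_core A.a A.ν (A.q 0) ha hν2 hν1 (A.hq 0).1 (A.hq 0).2
      (A.g 0) (hb0 ▸ A.a4_cont 0)
      (fun x hx => A.a4_upper 0 (by simp) x (hb0 ▸ hx))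
      A.a5_0 (fun h => A.xbar h 0) A.h₀ A.hh₀
      (fun h hh => hb0 ▸ A.a6_unique h hh 0)
  · -- quadrant 2
    have hGc : ContinuousOn (fun x => A.g 1 (-x)) (Set.Icc A.ν A.a) := by
      refine (hb1 ▸ A.a4_cont 1).comp continuous_neg.continuousOn ?_
      intro x hx
      simp only [Set.mem_Icc] at hx ⊢
      exact ⟨by linarith [hx.2], by linarith [hx.1]⟩
    have hGnn : ∀ x ∈ Set.Icc A.ν A.a, 0 ≤ A.g 1 (-x) := by
      intro x hx
      refine A.a4_upper 1 (by simp) (-x) ?_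
      rw [hb1]
      simp only [Set.mem_Icc] at hx ⊢
      exact ⟨by linarith [hx.2], by linarith [hx.1]⟩
    have hlim : Tendsto (fun x => A.g 1 (-x) / fa A.a x) (𝓝[<] A.a) (𝓝 (A.q 1)) := by
      refine Tendsto.congr (fun x => ?_) (A.a5_1.comp hneg)
      simp only [Function.comp_apply]
      rw [hfaeven]
    have huniq : ∀ h ∈ Set.Ioo 0 A.h₀,
        {x | x ∈ Set.Icc A.ν A.a ∧ x ^ 2 + A.g 1 (-x) ^ 2 = (A.a - h) ^ 2}
          = {-A.xbar h 1} := by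
      intro h hh
      have h1 := Set.ext_iff.mp (A.a6_unique h hh 1)
      ext x
      simp only [Set.mem_setOf_eq, Set.mem_singleton_iff]
      have h2 := h1 (-x)
      rw [hb1] at h2
      simp only [Set.mem_setOf_eq, Set.mem_singleton_iff, Set.mem_Icc] at h2
      constructor
      · rintro ⟨⟨hx1, hx2⟩, hx3⟩
        have h3 : -x = A.xbar h 1 :=
          h2.mp ⟨⟨by linarith, by linarith⟩, by rw [neg_sq]; exact hx3⟩
        linarith
      · intro hx
        have h3 : -x = A.xbar h 1 := by rw [hx, neg_neg]
        obtain ⟨⟨h5, h6⟩, h7⟩ := h2.mpr h3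
        rw [neg_sq] at h7
        exact ⟨⟨by linarith, by linarith⟩, h7⟩
    have hcore := statement7_core A.a A.ν (A.q 1) ha hν2 hν1 (A.hq 1).1 (A.hq 1).2
      (fun x => A.g 1 (-x)) hGc hGnn hlim (fun h => -A.xbar h 1) A.h₀ A.hh₀ huniq
    simp only [neg_sq, abs_neg] at hcore
    exact hcore
  · -- quadrant 3
    have hGc : ContinuousOn (fun x => -A.g 2 (-x)) (Set.Icc A.ν A.a) := by
      refine ContinuousOn.neg ?_
      refine (hb2 ▸ A.a4_cont 2).comp continuous_neg.continuousOn ?_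
      intro x hx
      simp only [Set.mem_Icc] at hx ⊢
      exact ⟨by linarith [hx.2], by linarith [hx.1]⟩
    have hGnn : ∀ x ∈ Set.Icc A.ν A.a, 0 ≤ -A.g 2 (-x) := by
      intro x hx
      refine neg_nonneg.2 (A.a4_lower 2 (by simp) (-x) ?_)
      rw [hb2]
      simp only [Set.mem_Icc] at hx ⊢
      exact ⟨by linarith [hx.2], by linarith [hx.1]⟩
    have hlim : Tendsto (fun x => -A.g 2 (-x) / fa A.a x) (𝓝[<] A.a) (𝓝 (A.q 2)) := by
      refine Tendsto.congr (fun x => ?_) (A.a5_2.comp hneg)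
      simp only [Function.comp_apply]
      rw [hfaeven]
    have huniq : ∀ h ∈ Set.Ioo 0 A.h₀,
        {x | x ∈ Set.Icc A.ν A.a ∧ x ^ 2 + (-A.g 2 (-x)) ^ 2 = (A.a - h) ^ 2}
          = {-A.xbar h 2} := by
      intro h hh
      have h1 := Set.ext_iff.mp (A.a6_unique h hh 2)
      ext x
      simp only [Set.mem_setOf_eq, Set.mem_singleton_iff, neg_sq]
      have h2 := h1 (-x)
      rw [hb2] at h2
      simp only [Set.mem_setOf_eq, Set.mem_singleton_iff, Set.mem_Icc] at h2
      constructor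
      · rintro ⟨⟨hx1, hx2⟩, hx3⟩
        have h3 : -x = A.xbar h 2 :=
          h2.mp ⟨⟨by linarith, by linarith⟩, by rw [neg_sq]; exact hx3⟩
        linarith
      · intro hx
        have h3 : -x = A.xbar h 2 := by rw [hx, neg_neg]
        obtain ⟨⟨h5, h6⟩, h7⟩ := h2.mpr h3
        rw [neg_sq] at h7
        exact ⟨⟨by linarith, by linarith⟩, h7⟩
    have hcore := statement7_core A.a A.ν (A.q 2) ha hν2 hν1 (A.hq 2).1 (A.hq 2).2
      (fun x => -A.g 2 (-x)) hGc hGnn hlim (fun h => -A.xbar h 2) A.h₀ A.hh₀ huniq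
    simp only [neg_sq, abs_neg] at hcore
    exact hcore
  · -- quadrant 4
    have hGnn : ∀ x ∈ Set.Icc A.ν A.a, 0 ≤ -A.g 3 x := by
      intro x hx
      exact neg_nonneg.2 (A.a4_lower 3 (by simp) x (hb3 ▸ hx))
    have huniq : ∀ h ∈ Set.Ioo 0 A.h₀,
        {x | x ∈ Set.Icc A.ν A.a ∧ x ^ 2 + (-A.g 3 x) ^ 2 = (A.a - h) ^ 2}
          = {A.xbar h 3} := by
      intro h hh
      have h1 := A.a6_unique h hh 3
      rw [hb3] at h1
      rw [← h1]
      ext x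
      simp only [Set.mem_setOf_eq, neg_sq]
    exact statement7_core A.a A.ν (A.q 3) ha hν2 hν1 (A.hq 3).1 (A.hq 3).2
      (fun x => -A.g 3 x) ((hb3 ▸ A.a4_cont 3).neg) hGnn
      A.a5_3 (fun h => A.xbar h 3) A.h₀ A.hh₀ huniq

end
end

section
/- Let a > 0 and p ∈ (0,2), and for small h > 0 let x*(h) := √(a² − 4h(2a−h)/(4−p²)) and B_h(x) := √((a−h)²−x²). Set τ(p) := p√(2a)/(a√(4−p²)). Then there exist constants C > 0 and h₀ > 0 such that for all h ∈ (0,h₀), |arctan(B_h(x*(h))/x*(h)) − τ(p)·h^{1/2}| ≤ C h^{3/2}. -/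
open MeasureTheory ProbabilityTheory Set Filter Topology

noncomputable section

lemma aux_arctan_bound (t : ℝ) (ht : 0 ≤ t) : |Real.arctan t - t| ≤ t ^ 3 := by
  have key : ∀ x : ℝ, HasDerivAt (fun s => Real.arctan s - s + s ^ 3)
      (1 / (1 + x ^ 2) - 1 + 3 * x ^ 2) x := by
    intro x
    have h1 := Real.hasDerivAt_arctan x
    have h2 : HasDerivAt (fun s : ℝ => s) 1 x := hasDerivAt_id x
    have h3 : HasDerivAt (fun s : ℝ => s ^ 3) (3 * x ^ 2) x := by
      simpa using hasDerivAt_pow 3 x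
    exact (h1.sub h2).add h3
  have key2 : ∀ x : ℝ, HasDerivAt (fun s => s - Real.arctan s)
      (1 - 1 / (1 + x ^ 2)) x := fun x => (hasDerivAt_id x).sub (Real.hasDerivAt_arctan x)
  have hmono1 : Monotone (fun s => Real.arctan s - s + s ^ 3) := by
    apply monotone_of_deriv_nonneg (fun x => (key x).differentiableAt)
    intro x
    rw [(key x).deriv]
    have h0 : (0:ℝ) < 1 + x ^ 2 := by positivity
    have h1 : 1 / (1 + x ^ 2) * (1 + x ^ 2) = 1 := by field_simp
    nlinarith [sq_nonneg x, sq_nonneg (x^2)]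
  have hmono2 : Monotone (fun s => s - Real.arctan s) := by
    apply monotone_of_deriv_nonneg (fun x => (key2 x).differentiableAt)
    intro x
    rw [(key2 x).deriv]
    have h0 : (0:ℝ) < 1 + x ^ 2 := by positivity
    rw [sub_nonneg, div_le_one h0]
    nlinarith [sq_nonneg x]
  have e1 := hmono1 ht
  have e2 := hmono2 ht
  simp [Real.arctan_zero] at e1 e2
  rw [abs_le]
  constructor <;> nlinarith

lemma aux_Dle (a q h : ℝ) (ha : 0 < a) (hq : 0 < q) (hh0 : 0 < h)
    (hha : h < a / 2) (hhq : h < q * a / 16) : 4 * h * (2 * a - h) / q ≤ a ^ 2 / 2 := by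
  rw [div_le_div_iff₀ hq (by norm_num : (0:ℝ) < 2)]
  have h16 : 16 * h < q * a := by
    rw [lt_div_iff₀ (by norm_num : (0:ℝ) < 16)] at hhq; linarith
  nlinarith [mul_pos hh0 ha, sq_nonneg h, mul_lt_mul_of_pos_left h16 ha]

lemma aux_uv (a q h D : ℝ) (ha : 0 < a) (hq : 0 < q) (hh0 : 0 < h)
    (hD0 : 0 < D) (hD' : D ≤ 8 * a * h / q) :
    |2 * a * D - a ^ 2 * h| ≤ h * (16 * a ^ 2 / q + a ^ 2) := by
  have e : h * (16 * a ^ 2 / q) = 2 * a * (8 * a * h / q) := by ring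
  have h1 : 2 * a * D ≤ 2 * a * (8 * a * h / q) :=
    mul_le_mul_of_nonneg_left hD' (by linarith)
  have h2 : 0 < 2 * a * D := by positivity
  have h3 : 0 ≤ a ^ 2 * h := by positivity
  have h4 : 0 ≤ h * (16 * a ^ 2 / q) := by positivity
  rw [abs_le]
  constructor <;> nlinarith

/-- The polar angle of the intersection point of the scaled ellipse boundary with the circle
of radius `a - h` is `τ(p) h^{1/2} + O(h^{3/2})` as `h → 0⁺`. -/
theorem statement8 (a p : ℝ) (ha : 0 < a) (hp : p ∈ Set.Ioo (0 : ℝ) 2) :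
    ∃ C > (0 : ℝ), ∃ h₀ > (0 : ℝ), ∀ h ∈ Set.Ioo 0 h₀,
      |Real.arctan (Real.sqrt ((a - h) ^ 2 -
            Real.sqrt (a ^ 2 - 4 * h * (2 * a - h) / (4 - p ^ 2)) ^ 2) /
          Real.sqrt (a ^ 2 - 4 * h * (2 * a - h) / (4 - p ^ 2))) -
        p * Real.sqrt (2 * a) / (a * Real.sqrt (4 - p ^ 2)) * h ^ ((1 : ℝ) / 2)| ≤
      C * h ^ ((3 : ℝ) / 2) := by
  obtain ⟨hp0, hp2⟩ := hp
  set q : ℝ := 4 - p ^ 2 with hq_def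
  have hq : 0 < q := by nlinarith
  set sq : ℝ := Real.sqrt q with hsq_def
  set sa : ℝ := Real.sqrt a with hsa_def
  set s2a : ℝ := Real.sqrt (2 * a) with hs2a_def
  have hsq0 : 0 < sq := Real.sqrt_pos.2 hq
  have hsa0 : 0 < sa := Real.sqrt_pos.2 ha
  have hs2a0 : 0 < s2a := Real.sqrt_pos.2 (by linarith)
  set K : ℝ := 2 * p * s2a / (a * sq) with hK_def
  set M : ℝ := 2 * (16 * a / q + a) / (a ^ 2 * sa) with hM_def
  set C₁ : ℝ := 2 * M / sq with hC₁_def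
  have hK0 : 0 < K := by positivity
  have hM0 : 0 < M := by positivity
  refine ⟨K ^ 3 + C₁, by positivity, min (a / 2) (q * a / 16), by positivity, ?_⟩
  rintro h ⟨hh0, hhlt⟩
  have hha : h < a / 2 := lt_of_lt_of_le hhlt (min_le_left _ _)
  have hhq : h < q * a / 16 := lt_of_lt_of_le hhlt (min_le_right _ _)
  have h2a : a ≤ 2 * a - h := by linarith
  have h2a' : 2 * a - h ≤ 2 * a := by linarith
  have h2a0 : 0 < 2 * a - h := by linarith
  set D : ℝ := 4 * h * (2 * a - h) / q with hD_def
  have hD0 : 0 < D := by positivity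
  have hDle : D ≤ a ^ 2 / 2 := aux_Dle a q h ha hq hh0 hha hhq
  set x2 : ℝ := a ^ 2 - 4 * h * (2 * a - h) / q with hx2_def
  have hx2D : x2 = a ^ 2 - D := by rw [hx2_def, hD_def]
  have hx2lo : a ^ 2 / 2 ≤ x2 := by rw [hx2D]; linarith
  have hx2pos : 0 < x2 := lt_of_lt_of_le (by positivity) hx2lo
  set x : ℝ := Real.sqrt x2 with hx_def
  have hx0 : 0 < x := Real.sqrt_pos.2 hx2pos
  have hxlo : a / 2 ≤ x := by
    rw [hx_def, Real.le_sqrt (by linarith) hx2pos.le]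
    have e : (a / 2) ^ 2 = a ^ 2 / 2 / 2 := by ring
    have h4 : 0 < a ^ 2 / 2 := by positivity
    rw [e]; linarith
  have hxsq : x ^ 2 = x2 := Real.sq_sqrt hx2pos.le
  -- B
  have hB2 : (a - h) ^ 2 - x ^ 2 = p ^ 2 * h * (2 * a - h) / q := by
    rw [hxsq, hx2_def, hq_def]
    field_simp [show (4:ℝ) - p ^ 2 ≠ 0 from hq.ne']
    ring
  have hB : Real.sqrt ((a - h) ^ 2 - x ^ 2)
      = p * Real.sqrt h * Real.sqrt (2 * a - h) / sq := by
    rw [hB2, Real.sqrt_div (by positivity), Real.sqrt_mul (by positivity),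
      Real.sqrt_mul (by positivity), Real.sqrt_sq hp0.le, hsq_def]
  set t : ℝ := p * Real.sqrt h * Real.sqrt (2 * a - h) / (sq * x) with ht_def
  have ht0 : 0 ≤ t := by positivity
  have hsh0 : 0 < Real.sqrt h := Real.sqrt_pos.2 hh0
  -- t ≤ K √h
  have htK : t ≤ K * Real.sqrt h := by
    have h1 : Real.sqrt (2 * a - h) ≤ s2a := Real.sqrt_le_sqrt (by linarith)
    have h2 : K * Real.sqrt h = p * Real.sqrt h * s2a / (sq * (a / 2)) := by
      rw [hK_def]; field_simp
    rw [ht_def, h2]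
    gcongr
  -- E bound
  set E : ℝ := Real.sqrt (2 * a - h) / x - s2a / a with hE_def
  set u : ℝ := a ^ 2 * (2 * a - h) with hu_def
  set v : ℝ := 2 * a * x2 with hv_def
  have hu0 : 0 < u := by positivity
  have hv0 : 0 < v := by positivity
  have hu' : Real.sqrt u = a * Real.sqrt (2 * a - h) := by
    rw [hu_def, Real.sqrt_mul (by positivity), Real.sqrt_sq ha.le]
  have hv' : Real.sqrt v = s2a * x := by
    rw [hv_def, Real.sqrt_mul (by positivity), hs2a_def, hx_def]
  have hEeq : E = (Real.sqrt u - Real.sqrt v) / (a * x) := by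
    rw [hE_def, hu', hv']
    field_simp
  have hsum : a * sa ≤ Real.sqrt u + Real.sqrt v := by
    have hsa2 : sa ^ 2 = a := Real.sq_sqrt ha.le
    have h1 : a * sa ≤ Real.sqrt u := by
      rw [Real.le_sqrt (by positivity) hu0.le, hu_def]
      have e : (a * sa) ^ 2 = a ^ 2 * a := by rw [mul_pow, hsa2]
      rw [e]
      have h2 : 0 ≤ a ^ 2 := sq_nonneg a
      gcongr
    linarith [Real.sqrt_nonneg v]
  have hprod : |Real.sqrt u - Real.sqrt v| * (Real.sqrt u + Real.sqrt v) = |u - v| := by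
    rw [← abs_of_nonneg (by positivity : (0:ℝ) ≤ Real.sqrt u + Real.sqrt v), ← abs_mul]
    congr 1
    have h1 : Real.sqrt u ^ 2 = u := Real.sq_sqrt hu0.le
    have h2 : Real.sqrt v ^ 2 = v := Real.sq_sqrt hv0.le
    have e : (Real.sqrt u - Real.sqrt v) * (Real.sqrt u + Real.sqrt v)
        = Real.sqrt u ^ 2 - Real.sqrt v ^ 2 := by ring
    rw [e, h1, h2]
  have hDle' : D ≤ 8 * a * h / q := by
    rw [hD_def, div_le_div_iff_of_pos_right hq]
    have e : 4 * h * (2 * a - h) = 8 * a * h - 4 * h ^ 2 := by ring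
    rw [e]
    linarith [sq_nonneg h]
  have huv : |u - v| ≤ h * (16 * a ^ 2 / q + a ^ 2) := by
    have huv_eq : u - v = 2 * a * D - a ^ 2 * h := by rw [hu_def, hv_def, hx2D]; ring
    rw [huv_eq]
    exact aux_uv a q h D ha hq hh0 hD0 hDle'
  have hsqrt_diff : |Real.sqrt u - Real.sqrt v| ≤ h * (16 * a ^ 2 / q + a ^ 2) / (a * sa) := by
    rw [le_div_iff₀ (by positivity)]
    calc |Real.sqrt u - Real.sqrt v| * (a * sa)
        ≤ |Real.sqrt u - Real.sqrt v| * (Real.sqrt u + Real.sqrt v) := by gcongr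
      _ = |u - v| := hprod
      _ ≤ h * (16 * a ^ 2 / q + a ^ 2) := huv
  have hE : |E| ≤ M * h := by
    rw [hEeq, abs_div, abs_of_pos (by positivity : (0:ℝ) < a * x)]
    have step : |Real.sqrt u - Real.sqrt v| / (a * x)
        ≤ (h * (16 * a ^ 2 / q + a ^ 2) / (a * sa)) / (a * (a / 2)) := by
      apply div_le_div₀ (by positivity) hsqrt_diff (by positivity)
      gcongr
    refine step.trans (le_of_eq ?_)
    rw [hM_def]
    field_simp
  -- |t - τ √h| ≤ C₁ h √h
  have hfac : t - p * s2a / (a * sq) * Real.sqrt h = (p * Real.sqrt h / sq) * E := by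
    rw [ht_def, hE_def]
    field_simp
  have htdiff : |t - p * s2a / (a * sq) * Real.sqrt h| ≤ C₁ * (h * Real.sqrt h) := by
    rw [hfac, abs_mul, abs_of_nonneg (by positivity : (0:ℝ) ≤ p * Real.sqrt h / sq)]
    calc p * Real.sqrt h / sq * |E| ≤ (2 * Real.sqrt h / sq) * (M * h) := by
          apply mul_le_mul _ hE (abs_nonneg _) (by positivity)
          gcongr
      _ = C₁ * (h * Real.sqrt h) := by rw [hC₁_def]; field_simp
  -- arctan bound
  have hat : |Real.arctan t - t| ≤ K ^ 3 * (h * Real.sqrt h) := by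
    refine (aux_arctan_bound t ht0).trans ?_
    calc t ^ 3 ≤ (K * Real.sqrt h) ^ 3 := by gcongr
      _ = K ^ 3 * (h * Real.sqrt h) := by
          rw [mul_pow, show Real.sqrt h ^ 3 = Real.sqrt h ^ 2 * Real.sqrt h from pow_succ _ 2,
            Real.sq_sqrt hh0.le]
  -- assemble
  have hgoal_arg : Real.sqrt ((a - h) ^ 2 - x ^ 2) / x = t := by
    rw [hB, ht_def, div_div]
  have hrw12 : h ^ ((1:ℝ)/2) = Real.sqrt h := (Real.sqrt_eq_rpow h).symm
  have hrw32 : h ^ ((3:ℝ)/2) = h * Real.sqrt h := by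
    rw [show (3:ℝ)/2 = 1 + 1/2 by norm_num, Real.rpow_add hh0, Real.rpow_one,
      ← Real.sqrt_eq_rpow]
  rw [hgoal_arg, hrw12, hrw32]
  calc |Real.arctan t - p * s2a / (a * sq) * Real.sqrt h|
      ≤ |Real.arctan t - t| + |t - p * s2a / (a * sq) * Real.sqrt h| := abs_sub_le _ _ _
    _ ≤ K ^ 3 * (h * Real.sqrt h) + C₁ * (h * Real.sqrt h) := add_le_add hat htdiff
    _ = (K ^ 3 + C₁) * (h * Real.sqrt h) := by ring


end
end

section
/- Let a > 0, and let (r_{1,n}, w_{1,n})_{n≥1} and (r_{3,n}, w_{3,n})_{n≥1} be sequences in [0,a] × [0,∞) with r_{1,n} → a, r_{3,n} → a, w_{1,n} → 0, w_{3,n} → 0. Write p(r,φ) := r(cos φ, sin φ) and e_n := w_{1,n} − w_{3,n}. Then the remainder R_n defined by |p(r_{1,n}, w_{1,n}) − p(r_{3,n}, π + w_{3,n})| = r_{1,n} + r_{3,n} − (a/4)e_n² + R_n satisfies R_n = O(e_n⁴ + e_n²(a − r_{1,n}) + e_n²(a − r_{3,n}) + (a − r_{1,n})² + (a − r_{3,n})²)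 as n → ∞; i.e., there is a constant C such that |R_n| ≤ C(e_n⁴ + e_n²(a − r_{1,n}) + e_n²(a − r_{3,n}) + (a − r_{1,n})² + (a − r_{3,n})²) for all sufficiently large n. -/
open MeasureTheory ProbabilityTheory Set Filter Topology

noncomputable section

lemma dist_pt_eq (x₁ y₁ x₂ y₂ : ℝ) :
    dist (pt x₁ y₁) (pt x₂ y₂) = Real.sqrt ((x₁ - x₂)^2 + (y₁ - y₂)^2) := by
  rw [EuclideanSpace.dist_eq]
  simp [pt, Fin.sum_univ_two, Real.dist_eq, sq_abs]

set_option maxHeartbeats 1000000 in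

lemma key (a u v e d c : ℝ) (ha : 0 < a) (hu0 : 0 ≤ u) (hu : u ≤ a/4) (hv0 : 0 ≤ v) (hv : v ≤ a/4)
    (he2 : e^2 ≤ 1) (hc1 : c ≤ 1)
    (hclo : 1 - e^2/2 - 5/96*e^4 ≤ c) (hchi : c ≤ 1 - e^2/2 + 5/96*e^4)
    (hd0 : 0 ≤ d)
    (hdsq : d^2 = (a-u)^2 + (a-v)^2 + 2*(a-u)*(a-v)*c) :
    |d - ((a-u) + (a-v) - a/4 * e^2)| ≤ (a+1) * (e^4 + e^2*u + e^2*v + u^2 + v^2) := by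
  have hr1 : 3*a/4 ≤ a - u := by linarith
  have hr3 : 3*a/4 ≤ a - v := by linarith
  have he20 : (0:ℝ) ≤ e^2 := sq_nonneg e
  have he40 : (0:ℝ) ≤ e^4 := by positivity
  have he4le : e^4 ≤ e^2 := by nlinarith [sq_nonneg e]
  have h1c0 : 0 ≤ 1 - c := by linarith
  have h1c : 1 - c ≤ e^2 := by nlinarith
  have hq0 : 0 ≤ 2*(a-u)*(a-v)*(1-c) := by
    have := mul_nonneg (mul_nonneg (by linarith : (0:ℝ) ≤ 2*(a-u)) (by linarith : (0:ℝ) ≤ a - v)) h1c0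
    linarith [this]
  have hqle : 2*(a-u)*(a-v)*(1-c) ≤ 2*a^2*e^2 := by
    nlinarith [mul_nonneg (mul_nonneg hu0 hv0) h1c0, mul_nonneg hu0 h1c0, mul_nonneg hv0 h1c0,
      mul_nonneg (mul_nonneg hu0 hv0) he20, mul_nonneg hu0 he20, mul_nonneg hv0 he20,
      mul_le_mul_of_nonneg_left h1c (by nlinarith : (0:ℝ) ≤ 2*(a-u)*(a-v))]
  have hS : d ≤ (a-u) + (a-v) := by nlinarith [hq0, hd0, hdsq]
  have ht0 : 0 ≤ (a-u)+(a-v) - d := by linarith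
  have hfac : ((a-u)+(a-v) - d) * ((a-u)+(a-v) + d) = 2*(a-u)*(a-v)*(1-c) := by
    linear_combination -hdsq
  have hta : ((a-u)+(a-v)-d) * a ≤ 2*a^2*e^2 := by
    nlinarith [hfac, hqle, mul_nonneg ht0 (show (0:ℝ) ≤ (a-u)+(a-v)+d-a by linarith)]
  have ht2 : (a-u)+(a-v) - d ≤ 2*a*e^2 :=
    le_of_mul_le_mul_right (by nlinarith [hta]) ha
  -- main bound via N = (a/4)e²(S+d) - q
  have hSd : a ≤ (a-u)+(a-v) + d := by linarith
  set S := (a-u)+(a-v) with hSdef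
  have hq2a : (a-u)*(a-v) ≤ a^2 := by nlinarith [mul_nonneg hu0 hv0]
  have hN : |(a/4*e^2 - (S - d)) * (S + d)| ≤ a * (a*e^4 + e^2*u + e^2*v) := by
    rw [abs_le]
    constructor
    · nlinarith [hfac, mul_le_mul_of_nonneg_left ht2 (by linarith : (0:ℝ) ≤ a/4*e^2),
        mul_nonneg (mul_nonneg hu0 hv0) he20, mul_nonneg hu0 he20, mul_nonneg hv0 he20,
        mul_le_mul_of_nonneg_left (show c - (1 - e^2/2) ≤ 5/96*e^4 by linarith)
          (by nlinarith : (0:ℝ) ≤ 2*(a-u)*(a-v)),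
        mul_le_mul_of_nonneg_right hq2a he40,
        mul_nonneg (mul_nonneg (by linarith : (0:ℝ) ≤ a-u) (by linarith : (0:ℝ) ≤ a-v)) he40]
    · nlinarith [hfac, mul_nonneg ht0 (by linarith : (0:ℝ) ≤ a/4*e^2),
        mul_nonneg (mul_nonneg hu0 hv0) he20, mul_nonneg hu0 he20, mul_nonneg hv0 he20,
        mul_le_mul_of_nonneg_left (show (1 - e^2/2) - c ≤ 5/96*e^4 by linarith)
          (by nlinarith : (0:ℝ) ≤ 2*(a-u)*(a-v)),
        mul_le_mul_of_nonneg_right hq2a he40,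
        mul_nonneg (mul_nonneg (by linarith : (0:ℝ) ≤ a-u) (by linarith : (0:ℝ) ≤ a-v)) he40]
  have hR : |d - (S - a/4*e^2)| ≤ a*e^4 + e^2*u + e^2*v := by
    have h1 : |d - (S - a/4*e^2)| * a ≤ |d - (S - a/4*e^2)| * (S + d) :=
      mul_le_mul_of_nonneg_left hSd (abs_nonneg _)
    have h2 : |d - (S - a/4*e^2)| * (S + d) = |(a/4*e^2 - (S - d)) * (S + d)| := by
      rw [abs_mul, abs_of_nonneg (by linarith : (0:ℝ) ≤ S + d)]
      congr 1
      congr 1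
      ring
    have h3 := h2 ▸ h1
    have h4 := le_trans h3 hN
    have : |d - (S - a/4*e^2)| * a ≤ (a*e^4 + e^2*u + e^2*v) * a := by linarith [h4]
    exact le_of_mul_le_mul_right this ha
  calc |d - (S - a/4 * e^2)| ≤ a*e^4 + e^2*u + e^2*v := hR
    _ ≤ (a+1) * (e^4 + e^2*u + e^2*v + u^2 + v^2) := by
        nlinarith [mul_nonneg hu0 he20, mul_nonneg hv0 he20, sq_nonneg u, sq_nonneg v, he40]

/-- **Lemma 3 (opposite quadrants).** For points `p(r_{1,n}, w_{1,n})` near the pole `(a,0)`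
and `p(r_{3,n}, π + w_{3,n})` near the pole `(-a,0)`, with `e_n = w_{1,n} - w_{3,n}`,
the distance equals `r_{1,n} + r_{3,n} - (a/4) e_n² + R_n` with
`R_n = O(e_n⁴ + e_n²(a-r_{1,n}) + e_n²(a-r_{3,n}) + (a-r_{1,n})² + (a-r_{3,n})²)`. -/
theorem statement10 (a : ℝ) (ha : 0 < a) (r₁ w₁ r₃ w₃ : ℕ → ℝ)
    (hr₁m : ∀ n, r₁ n ∈ Set.Icc 0 a) (hr₃m : ∀ n, r₃ n ∈ Set.Icc 0 a)
    (hw₁m : ∀ n, 0 ≤ w₁ n) (hw₃m : ∀ n, 0 ≤ w₃ n)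
    (hr₁ : Tendsto r₁ atTop (𝓝 a)) (hr₃ : Tendsto r₃ atTop (𝓝 a))
    (hw₁ : Tendsto w₁ atTop (𝓝 0)) (hw₃ : Tendsto w₃ atTop (𝓝 0)) :
    ∃ C : ℝ, ∃ n₀ : ℕ, ∀ n ≥ n₀,
      |dist (pt (r₁ n * Real.cos (w₁ n)) (r₁ n * Real.sin (w₁ n)))
          (pt (r₃ n * Real.cos (Real.pi + w₃ n)) (r₃ n * Real.sin (Real.pi + w₃ n))) -
        (r₁ n + r₃ n - a / 4 * (w₁ n - w₃ n) ^ 2)| ≤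
      C * ((w₁ n - w₃ n) ^ 4 + (w₁ n - w₃ n) ^ 2 * (a - r₁ n) +
        (w₁ n - w₃ n) ^ 2 * (a - r₃ n) + (a - r₁ n) ^ 2 + (a - r₃ n) ^ 2) := by

  refine ⟨a + 1, ?_⟩
  have h1 : ∀ᶠ n in atTop, 3*a/4 < r₁ n := hr₁.eventually (eventually_gt_nhds (by linarith))
  have h3 : ∀ᶠ n in atTop, 3*a/4 < r₃ n := hr₃.eventually (eventually_gt_nhds (by linarith))
  have h2 : ∀ᶠ n in atTop, w₁ n < 1/2 := hw₁.eventually (eventually_lt_nhds (by norm_num))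
  have h4 : ∀ᶠ n in atTop, w₃ n < 1/2 := hw₃.eventually (eventually_lt_nhds (by norm_num))
  obtain ⟨n₀, hn₀⟩ := eventually_atTop.mp (((h1.and h3).and (h2.and h4)))
  refine ⟨n₀, fun n hn => ?_⟩
  obtain ⟨⟨hr1b, hr3b⟩, hw1b, hw3b⟩ := hn₀ n hn
  have hr10 : 0 ≤ r₁ n := (hr₁m n).1
  have hr30 : 0 ≤ r₃ n := (hr₃m n).1
  have hr1a : r₁ n ≤ a := (hr₁m n).2
  have hr3a : r₃ n ≤ a := (hr₃m n).2
  have he1 : |w₁ n - w₃ n| ≤ 1 := by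
    rw [abs_le]; constructor <;> [linarith [hw₁m n, hw3b]; linarith [hw₃m n, hw1b]]
  have he2 : (w₁ n - w₃ n)^2 ≤ 1 := by
    have := abs_le.mp he1; nlinarith [this.1, this.2]
  have hcb := Real.cos_bound he1
  have he4 : |w₁ n - w₃ n|^4 = (w₁ n - w₃ n)^4 := by
    rw [show (4:ℕ) = 2*2 from rfl, pow_mul, sq_abs, ← pow_mul]
  rw [he4] at hcb
  have hcb' := abs_le.mp hcb
  have hdsq : (dist (pt (r₁ n * Real.cos (w₁ n)) (r₁ n * Real.sin (w₁ n)))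
      (pt (r₃ n * Real.cos (Real.pi + w₃ n)) (r₃ n * Real.sin (Real.pi + w₃ n))))^2 =
      (a - (a - r₁ n))^2 + (a - (a - r₃ n))^2 +
        2*(a - (a - r₁ n))*(a - (a - r₃ n))*Real.cos (w₁ n - w₃ n) := by
    rw [dist_pt_eq, Real.sq_sqrt (by positivity)]
    have hc1 := Real.sin_sq_add_cos_sq (w₁ n)
    have hc3 := Real.sin_sq_add_cos_sq (w₃ n)
    rw [Real.cos_sub, Real.cos_add, Real.sin_add, Real.cos_pi, Real.sin_pi]
    ring_nf
    nlinarith [hc1, hc3, sq_nonneg (Real.sin (w₁ n)), sq_nonneg (Real.cos (w₁ n))]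
  have := key a (a - r₁ n) (a - r₃ n) (w₁ n - w₃ n)
    (dist (pt (r₁ n * Real.cos (w₁ n)) (r₁ n * Real.sin (w₁ n)))
      (pt (r₃ n * Real.cos (Real.pi + w₃ n)) (r₃ n * Real.sin (Real.pi + w₃ n))))
    (Real.cos (w₁ n - w₃ n)) ha (by linarith) (by linarith) (by linarith) (by linarith)
    he2 (Real.cos_le_one _) (by linarith [hcb'.1]) (by linarith [hcb'.2]) dist_nonneg hdsq
  have heq : a - (a - r₁ n) + (a - (a - r₃ n)) - a/4 * (w₁ n - w₃ n)^2
      = r₁ n + r₃ n - a / 4 * (w₁ n - w₃ n) ^ 2 := by ring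
  rw [heq] at this
  exact this


end
end

section
/- Let a > 0, and let (r_{1,n}, w_{1,n})_{n≥1} and (r_{2,n}, w_{2,n})_{n≥1} be sequences in [0,a] × [0,∞) with r_{1,n} → a, r_{2,n} → a, w_{1,n} → 0, w_{2,n} → 0. Write p(r,φ) := r(cos φ, sin φ) and f_n := w_{1,n} + w_{2,n}. Then the remainder R_n defined by |p(r_{1,n}, w_{1,n}) − p(r_{2,n}, π − w_{2,n})| = r_{1,n} + r_{2,n} − (a/4)f_n² + R_n satisfies R_n = O(f_n⁴ + f_n²(a − r_{1,n}) + f_n²(a − r_{2,n}) + (a − r_{1,n})² + (a − r_{2,n})²) as n → ∞. -/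
open MeasureTheory ProbabilityTheory Set Filter Topology

noncomputable section

set_option maxHeartbeats 1600000 in
lemma key_s11 (a r₁ r₂ w₁ w₂ : ℝ) (ha : 0 < a)
    (h₁0 : 0 ≤ r₁) (h₁a : r₁ ≤ a) (h₂0 : 0 ≤ r₂) (h₂a : r₂ ≤ a)
    (hw₁0 : 0 ≤ w₁) (hw₂0 : 0 ≤ w₂)
    (hr₁ : 3*a/4 < r₁) (hr₂ : 3*a/4 < r₂) (hw₁ : w₁ < 1/2) (hw₂ : w₂ < 1/2) :
    |dist (pt (r₁ * Real.cos w₁) (r₁ * Real.sin w₁))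
        (pt (r₂ * Real.cos (Real.pi - w₂)) (r₂ * Real.sin (Real.pi - w₂))) -
      (r₁ + r₂ - a / 4 * (w₁ + w₂) ^ 2)| ≤
    2 * (3*a^2 + a + 1) / a * ((w₁ + w₂) ^ 4 + (w₁ + w₂) ^ 2 * (a - r₁) +
      (w₁ + w₂) ^ 2 * (a - r₂) + (a - r₁) ^ 2 + (a - r₂) ^ 2) := by
  obtain ⟨f, hf⟩ : ∃ f : ℝ, f = w₁ + w₂ := ⟨_, rfl⟩
  have hf0 : 0 ≤ f := by rw [hf]; linarith
  have hf1 : f < 1 := by rw [hf]; linarith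
  obtain ⟨c, hc⟩ : ∃ c : ℝ, c = Real.cos f := ⟨_, rfl⟩
  have hc1 : c ≤ 1 := hc ▸ Real.cos_le_one f
  have hcm1 : -1 ≤ c := hc ▸ Real.neg_one_le_cos f
  obtain ⟨E, hE⟩ : ∃ E : ℝ, E = (r₁ + r₂)^2 - 2*r₁*r₂*(1 - c) := ⟨_, rfl⟩
  obtain ⟨T, hT⟩ : ∃ T : ℝ, T = r₁ + r₂ - a / 4 * f ^ 2 := ⟨_, rfl⟩
  have hr12 : r₁ * r₂ ≤ a^2 := by nlinarith
  have hr12' : 0 ≤ r₁ * r₂ := mul_nonneg h₁0 h₂0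
  have hdist : dist (pt (r₁ * Real.cos w₁) (r₁ * Real.sin w₁))
      (pt (r₂ * Real.cos (Real.pi - w₂)) (r₂ * Real.sin (Real.pi - w₂)))
      = Real.sqrt E := by
    rw [EuclideanSpace.dist_eq]
    congr 1
    simp only [pt, PiLp.toLp_apply, Fin.sum_univ_two, Matrix.cons_val_zero, Matrix.cons_val_one,
      Matrix.head_cons, Real.dist_eq, sq_abs]
    rw [Real.cos_pi_sub, Real.sin_pi_sub, hE, hc, hf, Real.cos_add]
    linear_combination r₁^2 * (Real.sin_sq_add_cos_sq w₁) + r₂^2 * (Real.sin_sq_add_cos_sq w₂)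
  have hE0 : 0 ≤ E := by
    rw [hE]
    linarith [sq_nonneg (r₁ - r₂), mul_nonneg hr12' (show (0:ℝ) ≤ 1 + c by linarith)]
  have hf2 : f^2 ≤ 1 := by nlinarith
  have hf4 : (0:ℝ) ≤ f^4 := by positivity
  have hTlb : a / 2 ≤ T := by
    rw [hT]
    linarith [mul_nonneg ha.le (show (0:ℝ) ≤ 1 - f^2 by linarith)]
  have hT0 : 0 < T := by linarith
  -- cosine Taylor bound
  have hcb := Real.cos_bound (x := f) (by rw [abs_of_nonneg hf0]; linarith)
  rw [abs_of_nonneg hf0] at hcb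
  obtain ⟨g, hg⟩ : ∃ g : ℝ, g = c - (1 - f^2/2) := ⟨_, rfl⟩
  have hgb : |g| ≤ f^4 := by
    rw [hg, hc]
    calc |Real.cos f - (1 - f^2/2)| ≤ f^4 * (5/96) := hcb
      _ ≤ f^4 := by linarith [pow_nonneg hf0 4]
  rw [abs_le] at hgb
  have hid : E - T^2 = f^2*((a/2)*((a - r₁)+(a - r₂)) - (a - r₁)*(a - r₂))
      + 2*(r₁*r₂)*g - a^2*f^4/16 := by
    rw [hE, hT, hg]; ring
  have hd₁ : 0 ≤ a - r₁ := by linarith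
  have hd₂ : 0 ≤ a - r₂ := by linarith
  -- bracket bounds
  have hbr0 : 0 ≤ (a/2)*((a - r₁)+(a - r₂)) - (a - r₁)*(a - r₂) := by
    have h1 : (a - r₁)*(a - r₂) ≤ (a/2)*(a - r₂) :=
      mul_le_mul_of_nonneg_right (by linarith) hd₂
    linarith [mul_nonneg ha.le hd₁]
  have hbru : (a/2)*((a - r₁)+(a - r₂)) - (a - r₁)*(a - r₂) ≤ (a/2)*((a - r₁)+(a - r₂)) := by
    linarith [mul_nonneg hd₁ hd₂]
  have ht₁0 : 0 ≤ f^2*((a/2)*((a - r₁)+(a - r₂)) - (a - r₁)*(a - r₂)) :=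
    mul_nonneg (sq_nonneg f) hbr0
  have ht₁u : f^2*((a/2)*((a - r₁)+(a - r₂)) - (a - r₁)*(a - r₂))
      ≤ (a/2)*(f^2*(a - r₁) + f^2*(a - r₂)) := by
    have h := mul_le_mul_of_nonneg_left hbru (sq_nonneg f)
    nlinarith [h]
  -- g-term bounds
  have hgu : r₁*r₂*g ≤ a^2*f^4 :=
    le_trans (mul_le_mul_of_nonneg_left hgb.2 hr12') (mul_le_mul_of_nonneg_right hr12 hf4)
  have hgl : -(a^2*f^4) ≤ r₁*r₂*g := by
    have h1 : r₁*r₂*(-(f^4)) ≤ r₁*r₂*g := mul_le_mul_of_nonneg_left hgb.1 hr12'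
    have h2 : r₁*r₂*f^4 ≤ a^2*f^4 := mul_le_mul_of_nonneg_right hr12 hf4
    linarith [h1, h2]
  have hEb : |E - T^2| ≤ (3*a^2 + a + 1) * (f ^ 4 + f ^ 2 * (a - r₁) +
      f ^ 2 * (a - r₂) + (a - r₁) ^ 2 + (a - r₂) ^ 2) := by
    have hfd₁ : 0 ≤ f^2 * (a - r₁) := mul_nonneg (sq_nonneg f) hd₁
    have hfd₂ : 0 ≤ f^2 * (a - r₂) := mul_nonneg (sq_nonneg f) hd₂
    have hK1 : (0:ℝ) ≤ a^2*(f^2*(a-r₁)) := by positivity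
    have hK2 : (0:ℝ) ≤ a^2*(f^2*(a-r₂)) := by positivity
    have hK3 : (0:ℝ) ≤ a*(f^2*(a-r₁)) := by positivity
    have hK4 : (0:ℝ) ≤ a*(f^2*(a-r₂)) := by positivity
    have hK5 : (0:ℝ) ≤ a^2*(a-r₁)^2 := by positivity
    have hK6 : (0:ℝ) ≤ a^2*(a-r₂)^2 := by positivity
    have hK7 : (0:ℝ) ≤ a*(a-r₁)^2 := by positivity
    have hK8 : (0:ℝ) ≤ a*(a-r₂)^2 := by positivity
    have hK9 : (0:ℝ) ≤ a*f^4 := by positivity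
    have hK10 : (0:ℝ) ≤ a^2*f^4 := by positivity
    rw [hid, abs_le]
    constructor
    · linarith [ht₁0, hgl, sq_nonneg (a-r₁), sq_nonneg (a-r₂),
        hfd₁, hfd₂, hK1, hK2, hK3, hK4, hK5, hK6, hK7, hK8, hK9, hK10, hf4]
    · linarith [ht₁u, hgu, sq_nonneg (a-r₁), sq_nonneg (a-r₂),
        hfd₁, hfd₂, hK1, hK2, hK3, hK4, hK5, hK6, hK7, hK8, hK9, hK10, hf4]
  have hsq : Real.sqrt E ^ 2 = E := Real.sq_sqrt hE0
  have hkey : |Real.sqrt E - T| * T ≤ |E - T^2| := by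
    have h1 : |Real.sqrt E - T| * (Real.sqrt E + T) = |E - T^2| := by
      rw [← abs_of_nonneg (show (0:ℝ) ≤ Real.sqrt E + T by positivity), ← abs_mul]
      congr 1
      linear_combination hsq
    calc |Real.sqrt E - T| * T ≤ |Real.sqrt E - T| * (Real.sqrt E + T) := by
          apply mul_le_mul_of_nonneg_left _ (abs_nonneg _)
          linarith [Real.sqrt_nonneg E]
      _ = |E - T^2| := h1
  rw [hdist, ← hf, ← hT]
  rw [div_mul_eq_mul_div, le_div_iff₀ ha]
  have h5 : |Real.sqrt E - T| * (a/2) ≤ |Real.sqrt E - T| * T :=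
    mul_le_mul_of_nonneg_left hTlb (abs_nonneg _)
  linarith [hkey, hEb, h5]

/-- **Lemma 4 (adjacent quadrants).** For points `p(r_{1,n}, w_{1,n})` near the pole `(a,0)`
and `p(r_{2,n}, π - w_{2,n})` near the pole `(-a,0)`, with `f_n = w_{1,n} + w_{2,n}`,
the distance equals `r_{1,n} + r_{2,n} - (a/4) f_n² + R_n` with
`R_n = O(f_n⁴ + f_n²(a-r_{1,n}) + f_n²(a-r_{2,n}) + (a-r_{1,n})² + (a-r_{2,n})²)`. -/
theorem statement11 (a : ℝ) (ha : 0 < a) (r₁ w₁ r₂ w₂ : ℕ → ℝ)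
    (hr₁m : ∀ n, r₁ n ∈ Set.Icc 0 a) (hr₂m : ∀ n, r₂ n ∈ Set.Icc 0 a)
    (hw₁m : ∀ n, 0 ≤ w₁ n) (hw₂m : ∀ n, 0 ≤ w₂ n)
    (hr₁ : Tendsto r₁ atTop (𝓝 a)) (hr₂ : Tendsto r₂ atTop (𝓝 a))
    (hw₁ : Tendsto w₁ atTop (𝓝 0)) (hw₂ : Tendsto w₂ atTop (𝓝 0)) :
    ∃ C : ℝ, ∃ n₀ : ℕ, ∀ n ≥ n₀,
      |dist (pt (r₁ n * Real.cos (w₁ n)) (r₁ n * Real.sin (w₁ n)))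
          (pt (r₂ n * Real.cos (Real.pi - w₂ n)) (r₂ n * Real.sin (Real.pi - w₂ n))) -
        (r₁ n + r₂ n - a / 4 * (w₁ n + w₂ n) ^ 2)| ≤
      C * ((w₁ n + w₂ n) ^ 4 + (w₁ n + w₂ n) ^ 2 * (a - r₁ n) +
        (w₁ n + w₂ n) ^ 2 * (a - r₂ n) + (a - r₁ n) ^ 2 + (a - r₂ n) ^ 2) := by
  refine ⟨2 * (3*a^2 + a + 1) / a, ?_⟩
  have h1 := hr₁.eventually (eventually_gt_nhds (show 3*a/4 < a by linarith))
  have h2 := hr₂.eventually (eventually_gt_nhds (show 3*a/4 < a by linarith))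
  have h3 := hw₁.eventually (eventually_lt_nhds (show (0:ℝ) < 1/2 by norm_num))
  have h4 := hw₂.eventually (eventually_lt_nhds (show (0:ℝ) < 1/2 by norm_num))
  obtain ⟨n₀, hn₀⟩ := Filter.eventually_atTop.1 (((h1.and h2).and (h3.and h4)))
  refine ⟨n₀, fun n hn => ?_⟩
  obtain ⟨⟨hb1, hb2⟩, hb3, hb4⟩ := hn₀ n hn
  exact key_s11 a (r₁ n) (r₂ n) (w₁ n) (w₂ n) ha (hr₁m n).1 (hr₁m n).2 (hr₂m n).1 (hr₂m n).2
    (hw₁m n) (hw₂m n) hb1 hb2 hb3 hb4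

end
end
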